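/- arXiv:2007.09216 — 13 statements merged into one kernel-verified Lean document; each statement's English description precedes it below -/
import Mathlib

section
/- The representation of a frame as a positive perturbation of a Parseval frame is unique: if T and T′ are bounded positive operators on a complex Hilbert space K with bounded inverses, and (e_j)_{j∈J}, (e′_j)_{j∈J} are Parseval frames in K with T e_j = T′ e′_j for all j ∈ J, then T = T′ and e_j = e′_j for all j ∈ J. -/
open scoped InnerProductSpace

lemma hasSum_polar {K : Type*} [NormedAddCommGroup K] [InnerProductSpace ℂ K]
    {J : Type*} (e : J → K)
    (hPar : ∀ f : K, HasSum (fun j => ‖⟪e j, f⟫_ℂ‖ ^ 2) (‖f‖ ^ 2))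
    (f g : K) :
    HasSum (fun j => (starRingEnd ℂ) ⟪e j, f⟫_ℂ * ⟪e j, g⟫_ℂ) ⟪f, g⟫_ℂ := by
  have H : ∀ h : K, HasSum (fun j => ((‖⟪e j, h⟫_ℂ‖ : ℂ)) ^ 2) ((‖h‖ : ℂ) ^ 2) := by
    intro h
    have := (hPar h).mapL Complex.ofRealCLM
    simpa using this
  have h1 := H (f + g)
  have h2 := H (f - g)
  have h3 := H (f - Complex.I • g)
  have h4 := H (f + Complex.I • g)
  have hsum := ((h1.sub h2).add ((h3.sub h4).mul_right Complex.I)).div_const 4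
  have hfun : (fun j => (starRingEnd ℂ) ⟪e j, f⟫_ℂ * ⟪e j, g⟫_ℂ)
      = fun j => ((‖⟪e j, f + g⟫_ℂ‖ : ℂ) ^ 2 - (‖⟪e j, f - g⟫_ℂ‖ : ℂ) ^ 2 +
          ((‖⟪e j, f - Complex.I • g⟫_ℂ‖ : ℂ) ^ 2
            - (‖⟪e j, f + Complex.I • g⟫_ℂ‖ : ℂ) ^ 2) * Complex.I) / 4 := by
    funext j
    have hpol := inner_eq_sum_norm_sq_div_four (𝕜 := ℂ) (⟪e j, f⟫_ℂ) (⟪e j, g⟫_ℂ)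
    rw [RCLike.inner_apply, mul_comm (⟪e j, g⟫_ℂ)] at hpol
    rw [hpol]
    simp [inner_add_right, inner_sub_right, inner_smul_right, smul_eq_mul, Complex.I]
  rw [hfun]
  have hpol2 := inner_eq_sum_norm_sq_div_four (𝕜 := ℂ) f g
  rw [hpol2]
  simpa [Complex.I] using hsum

set_option synthInstance.maxHeartbeats 1000000 in
/-- Uniqueness of the representation of a frame as a positive perturbation of a
Parseval frame: if `T, T'` are bounded positive operators with bounded inverses and
`(e j)`, `(e' j)` are Parseval frames with `T (e j) = T' (e' j)` for all `j`, then `T = T'`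
and `e j = e' j` for all `j`. -/
theorem statement3
    {K : Type*} [NormedAddCommGroup K] [InnerProductSpace ℂ K] [CompleteSpace K]
    {J : Type*} [Countable J]
    (T Tinv T' Tinv' : K →L[ℂ] K)
    (hT : T.IsPositive) (hT' : T'.IsPositive)
    (hTinv₁ : T ∘L Tinv = 1) (hTinv₂ : Tinv ∘L T = 1)
    (hTinv'₁ : T' ∘L Tinv' = 1) (hTinv'₂ : Tinv' ∘L T' = 1)
    (e e' : J → K)
    (hPar : ∀ f : K, HasSum (fun j => ‖⟪e j, f⟫_ℂ‖ ^ 2) (‖f‖ ^ 2))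
    (hPar' : ∀ f : K, HasSum (fun j => ‖⟪e' j, f⟫_ℂ‖ ^ 2) (‖f‖ ^ 2))
    (heq : ∀ j, T (e j) = T' (e' j)) :
    T = T' ∧ ∀ j, e j = e' j := by
  have hTsym := hT.isSelfAdjoint.isSymmetric
  have hTsym' := hT'.isSelfAdjoint.isSymmetric
  have hTT' : T = T' := by
    have hsq : T * T = T' * T' := by
      ext f
      refine ext_inner_right ℂ fun g => ?_
      have key1 := hasSum_polar e hPar (T f) (T g)
      have key2 := hasSum_polar e' hPar' (T' f) (T' g)
      have hterm : (fun j => (starRingEnd ℂ) ⟪e j, T f⟫_ℂ * ⟪e j, T g⟫_ℂ)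
          = fun j => (starRingEnd ℂ) ⟪e' j, T' f⟫_ℂ * ⟪e' j, T' g⟫_ℂ := by
        funext j
        have h₁ : ⟪e j, T f⟫_ℂ = ⟪e' j, T' f⟫_ℂ := by
          have a1 : ⟪T (e j), f⟫_ℂ = ⟪e j, T f⟫_ℂ := hTsym (e j) f
          have a2 : ⟪T' (e' j), f⟫_ℂ = ⟪e' j, T' f⟫_ℂ := hTsym' (e' j) f
          rw [← a1, ← a2, heq j]
        have h₂ : ⟪e j, T g⟫_ℂ = ⟪e' j, T' g⟫_ℂ := by
          have a1 : ⟪T (e j), g⟫_ℂ = ⟪e j, T g⟫_ℂ := hTsym (e j) g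
          have a2 : ⟪T' (e' j), g⟫_ℂ = ⟪e' j, T' g⟫_ℂ := hTsym' (e' j) g
          rw [← a1, ← a2, heq j]
        rw [h₁, h₂]
      rw [hterm] at key1
      have hinner : ⟪T f, T g⟫_ℂ = ⟪T' f, T' g⟫_ℂ := key1.unique key2
      have b1 : ⟪T (T f), g⟫_ℂ = ⟪T f, T g⟫_ℂ := hTsym (T f) g
      have b2 : ⟪T' (T' f), g⟫_ℂ = ⟪T' f, T' g⟫_ℂ := hTsym' (T' f) g
      calc ⟪(T * T) f, g⟫_ℂ = ⟪T f, T g⟫_ℂ := b1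
        _ = ⟪T' f, T' g⟫_ℂ := hinner
        _ = ⟪(T' * T') f, g⟫_ℂ := b2.symm
    have hpos : (0 : K →L[ℂ] K) ≤ T := (ContinuousLinearMap.nonneg_iff_isPositive T).2 hT
    have hpos' : (0 : K →L[ℂ] K) ≤ T' := (ContinuousLinearMap.nonneg_iff_isPositive T').2 hT'
    calc T = CFC.sqrt (T * T) := (CFC.sqrt_mul_self T hpos).symm
      _ = CFC.sqrt (T' * T') := by rw [hsq]
      _ = T' := CFC.sqrt_mul_self T' hpos'
  refine ⟨hTT', fun j => ?_⟩
  have : Tinv (T (e j)) = Tinv (T (e' j)) := by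
    rw [heq j, hTT']
  calc e j = (Tinv ∘L T) (e j) := by rw [hTinv₂]; rfl
    _ = (Tinv ∘L T) (e' j) := this
    _ = e' j := by rw [hTinv₂]; rfl
end

section
/- Let (e_j)_{j∈J} be a Parseval frame in a complex Hilbert space K with analysis operator θ. Suppose C is a bounded positive operator on K with bounded inverse and (e^o_j)_{j∈J} is a Parseval frame in K such that (ψ_j)_{j∈J} with ψ_j = C⁻¹ e^o_j is a dual frame of (e_j) (i.e., (ψ_j) is a frame and f = ∑_{j∈J} ⟨f, e_j⟩ ψ_j for all f ∈ K). Then C ≤ I (that is, ⟨C f, f⟩ ≤ ‖f‖² for all f) and the Hilbert-space dimension of the closure of the range of I − C² is at most the Hilbert-space dimension of the orthogonal complement of the range of θ in ℓ²(J). -/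
open scoped InnerProductSpace ENNReal

noncomputable section Statement5Aux

variable {K : Type*} [NormedAddCommGroup K] [InnerProductSpace ℂ K]
variable {J : Type*}

private lemma memℓp_analysis {v : J → K}
    (hv : ∀ f : K, HasSum (fun j => ‖⟪v j, f⟫_ℂ‖ ^ 2) (‖f‖ ^ 2)) (f : K) :
    Memℓp (fun j => ⟪v j, f⟫_ℂ) 2 := by
  apply memℓp_gen
  have h2 : ((2 : ℝ≥0∞)).toReal = ((2 : ℕ) : ℝ) := by norm_num
  simpa [h2, Real.rpow_natCast] using (hv f).summable

private def analysisLI {v : J → K}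
    (hv : ∀ f : K, HasSum (fun j => ‖⟪v j, f⟫_ℂ‖ ^ 2) (‖f‖ ^ 2)) :
    K →ₗᵢ[ℂ] lp (fun _ : J => ℂ) 2 where
  toFun f := ⟨fun j => ⟪v j, f⟫_ℂ, memℓp_analysis hv f⟩
  map_add' f g := by
    apply lp.ext
    rw [lp.coeFn_add]
    funext j
    exact inner_add_right _ _ _
  map_smul' c f := by
    apply lp.ext
    rw [lp.coeFn_smul]
    funext j
    exact inner_smul_right _ _ _
  norm_map' f := by
    show ‖(⟨fun j => ⟪v j, f⟫_ℂ, memℓp_analysis hv f⟩ : lp (fun _ : J => ℂ) 2)‖ = ‖f‖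
    have hp : (0:ℝ) < (2:ℝ≥0∞).toReal := by norm_num
    have h1 := lp.hasSum_norm hp
      (⟨fun j => ⟪v j, f⟫_ℂ, memℓp_analysis hv f⟩ : lp (fun _ : J => ℂ) 2)
    have h2 : ((2 : ℝ≥0∞)).toReal = ((2 : ℕ) : ℝ) := by norm_num
    rw [h2] at h1
    simp only [Real.rpow_natCast] at h1
    have h3 := h1.unique (hv f)
    have h4 := norm_nonneg (⟨fun j => ⟪v j, f⟫_ℂ, memℓp_analysis hv f⟩ : lp (fun _ : J => ℂ) 2)
    have h5 := norm_nonneg f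
    nlinarith

private lemma analysisLI_apply {v : J → K}
    (hv : ∀ f : K, HasSum (fun j => ‖⟪v j, f⟫_ℂ‖ ^ 2) (‖f‖ ^ 2)) (f : K) (j : J) :
    (analysisLI hv f) j = ⟪v j, f⟫_ℂ := rfl

end Statement5Aux

set_option maxHeartbeats 2000000 in
set_option synthInstance.maxHeartbeats 1000000 in
/-- Let `(e j)` be a Parseval frame in `K` whose analysis operator has range `Θ`
in `ℓ²(J)`. Suppose `C` is a bounded positive operator with bounded inverse `Cinv` and
`(e^o j)` is a Parseval frame such that `ψ j = Cinv (e^o j)` is a dual frame of `(e j)`.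
Then `C ≤ I` (i.e. `⟨C f, f⟩ ≤ ‖f‖²` for all `f`) and the Hilbert-space dimension of the
closure of the range of `I − C²` is at most that of `Θᗮ` (expressed by the existence of a
linear isometric embedding).
(The paper's inner product `(f, g)`, linear in the first argument, is `⟪g, f⟫_ℂ`.) -/
theorem statement5
    {K : Type*} [NormedAddCommGroup K] [InnerProductSpace ℂ K] [CompleteSpace K]
    {J : Type*} [Countable J]
    (e : J → K) (hPar : ∀ f : K, HasSum (fun j => ‖⟪e j, f⟫_ℂ‖ ^ 2) (‖f‖ ^ 2))
    (Θ : Submodule ℂ (lp (fun _ : J => ℂ) 2))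
    (hΘ : ∀ x : lp (fun _ : J => ℂ) 2, x ∈ Θ ↔ ∃ f : K, ∀ j, x j = ⟪e j, f⟫_ℂ)
    (C Cinv : K →L[ℂ] K) (hC : C.IsPositive)
    (hCinv₁ : C ∘L Cinv = 1) (hCinv₂ : Cinv ∘L C = 1)
    (eo : J → K) (hParo : ∀ f : K, HasSum (fun j => ‖⟪eo j, f⟫_ℂ‖ ^ 2) (‖f‖ ^ 2))
    (hψframe : ∃ A B : ℝ, 0 < A ∧ A ≤ B ∧ ∀ f : K, ∃ s : ℝ,
        HasSum (fun j => ‖⟪Cinv (eo j), f⟫_ℂ‖ ^ 2) s ∧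
        A * ‖f‖ ^ 2 ≤ s ∧ s ≤ B * ‖f‖ ^ 2)
    (hdual : ∀ f : K, HasSum (fun j => ⟪e j, f⟫_ℂ • Cinv (eo j)) f) :
    (∀ f : K, (⟪f, C f⟫_ℂ).re ≤ ‖f‖ ^ 2) ∧
    Nonempty ((LinearMap.range ((1 - C ∘L C : K →L[ℂ] K) : K →ₗ[ℂ] K)).topologicalClosure →ₗᵢ[ℂ] Θᗮ) := by
  classical
  -- analysis operators
  set θe : K →ₗᵢ[ℂ] lp (fun _ : J => ℂ) 2 := analysisLI hPar with hθe
  set θo : K →ₗᵢ[ℂ] lp (fun _ : J => ℂ) 2 := analysisLI hParo with hθo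
  -- symmetry of C
  have symC : ∀ x y : K, ⟪C x, y⟫_ℂ = ⟪x, C y⟫_ℂ := fun x y =>
    (ContinuousLinearMap.isSelfAdjoint_iff_isSymmetric.mp hC.isSelfAdjoint) x y
  have hCC : ∀ x : K, C (Cinv x) = x := fun x => by
    have h := ContinuousLinearMap.ext_iff.mp hCinv₁ x
    simpa using h
  -- key summation identity
  have key : ∀ f h : K, HasSum (fun j => ⟪e j, h⟫_ℂ * ⟪f, eo j⟫_ℂ) ⟪f, C h⟫_ℂ := by
    intro f h
    have h1 := (hdual h).mapL C
    have h2 : ∀ j, C (⟪e j, h⟫_ℂ • Cinv (eo j)) = ⟪e j, h⟫_ℂ • eo j := fun j => by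
      rw [map_smul, hCC]
    simp only [h2] at h1
    have h3 := h1.mapL (innerSL ℂ f)
    simpa only [innerSL_apply_apply, inner_smul_right] using h3
  -- the linear map W
  set W : K →ₗ[ℂ] lp (fun _ : J => ℂ) 2 :=
    θo.toLinearMap - θe.toLinearMap ∘ₗ (C : K →ₗ[ℂ] K) with hW
  have Wapp : ∀ f : K, W f = θo f - θe (C f) := fun f => rfl
  set S : K →L[ℂ] K := 1 - C ∘L C with hSdef
  have hSapp : ∀ f : K, S f = f - C (C f) := fun f => rfl
  -- cross inner product
  have hcross : ∀ f : K, ⟪θo f, θe (C f)⟫_ℂ = ⟪f, C (C f)⟫_ℂ := by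
    intro f
    have h1 := lp.hasSum_inner (𝕜 := ℂ) (θo f) (θe (C f))
    have h2 : ∀ j, ⟪(θo f) j, (θe (C f)) j⟫_ℂ = ⟪e j, C f⟫_ℂ * ⟪f, eo j⟫_ℂ := by
      intro j
      rw [analysisLI_apply hParo, analysisLI_apply hPar, RCLike.inner_apply,
        inner_conj_symm]
    simp only [h2] at h1
    exact (h1.unique (key f (C f)))
  -- ℂ-valued norm identity for W
  have hWinner : ∀ f : K, ⟪S f, f⟫_ℂ = ⟪W f, W f⟫_ℂ := by
    intro f
    rw [Wapp, inner_sub_sub_self, θo.inner_map_map, θe.inner_map_map, hcross f]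
    have hc2 : ⟪θe (C f), θo f⟫_ℂ = ⟪C (C f), f⟫_ℂ := by
      rw [← inner_conj_symm (θe (C f)) (θo f), hcross f, inner_conj_symm]
    rw [hc2, hSapp, inner_sub_left]
    have hsym2 : ⟪C f, C f⟫_ℂ = ⟪f, C (C f)⟫_ℂ := symC f (C f)
    rw [hsym2]
    ring
  -- norm-squared identity
  have hSW : ∀ f : K, ⟪S f, f⟫_ℂ = ((‖W f‖ : ℂ)) ^ 2 := fun f => by
    rw [hWinner f]
    exact_mod_cast inner_self_eq_norm_sq_to_K (W f)
  -- S is positive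
  have hSsym : ∀ x y : K, ⟪S x, y⟫_ℂ = ⟪x, S y⟫_ℂ := by
    intro x y
    rw [hSapp, hSapp, inner_sub_left, inner_sub_right, symC (C x) y, symC x (C y)]
  have hSsa : IsSelfAdjoint S :=
    ContinuousLinearMap.isSelfAdjoint_iff_isSymmetric.mpr fun x y => hSsym x y
  have hSre : ∀ f : K, (⟪S f, f⟫_ℂ).re = ‖W f‖ ^ 2 := fun f => by
    rw [hSW f, ← Complex.ofReal_pow, Complex.ofReal_re]
  have hSpos : S.IsPositive := by
    refine ⟨fun x y => hSsym x y, fun f => ?_⟩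
    rw [ContinuousLinearMap.reApplyInnerSelf_apply]
    show (0:ℝ) ≤ (⟪S f, f⟫_ℂ).re
    rw [hSre f]
    positivity
  -- first claim
  have hfre : ∀ f : K, (⟪f, f⟫_ℂ).re = ‖f‖ ^ 2 := fun f => by
    simpa using inner_self_eq_norm_sq (𝕜 := ℂ) f
  have hCnorm : ∀ f : K, ‖C f‖ ≤ ‖f‖ := by
    intro f
    have h1 : (0:ℝ) ≤ (⟪S f, f⟫_ℂ).re := by rw [hSre f]; positivity
    have h2 : (⟪S f, f⟫_ℂ).re = ‖f‖ ^ 2 - ‖C f‖ ^ 2 := by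
      have h3 : ⟪C (C f), f⟫_ℂ = ⟪C f, C f⟫_ℂ := symC (C f) f
      rw [hSapp, inner_sub_left, Complex.sub_re, hfre f, h3, hfre (C f)]
    nlinarith [norm_nonneg (C f), norm_nonneg f, h1, h2]
  have part1 : ∀ f : K, (⟪f, C f⟫_ℂ).re ≤ ‖f‖ ^ 2 := by
    intro f
    calc (⟪f, C f⟫_ℂ).re ≤ ‖⟪f, C f⟫_ℂ‖ := Complex.re_le_norm _
      _ ≤ ‖f‖ * ‖C f‖ := norm_inner_le_norm _ _
      _ ≤ ‖f‖ * ‖f‖ := by nlinarith [norm_nonneg f, hCnorm f]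
      _ = ‖f‖ ^ 2 := (sq ‖f‖).symm
  -- W maps into the orthogonal complement of Θ
  have Wmem : ∀ f : K, W f ∈ Θᗮ := by
    intro f
    rw [Submodule.mem_orthogonal]
    intro x hx
    obtain ⟨g, hg⟩ := (hΘ x).mp hx
    have hxg : x = θe g := lp.ext (funext fun j => by
      rw [hg j]; exact (analysisLI_apply hPar g j).symm)
    rw [hxg, Wapp, inner_sub_right, θe.inner_map_map]
    have h1 := lp.hasSum_inner (𝕜 := ℂ) (θe g) (θo f)
    have h2 : ∀ j, ⟪(θe g) j, (θo f) j⟫_ℂ = star (⟪e j, g⟫_ℂ * ⟪f, eo j⟫_ℂ) := by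
      intro j
      rw [analysisLI_apply hPar, analysisLI_apply hParo]
      simp only [RCLike.inner_apply, RCLike.star_def, map_mul, inner_conj_symm]
      exact mul_comm _ _
    simp only [h2] at h1
    have h3 := (key f g).star
    have h4 : ⟪θe g, θo f⟫_ℂ = star ⟪f, C g⟫_ℂ := h1.unique h3
    rw [h4]
    have h5 : star ⟪f, C g⟫_ℂ = ⟪C g, f⟫_ℂ := by rw [RCLike.star_def, inner_conj_symm]
    rw [h5, symC g f, sub_self]
  -- square root of S
  have hS0 : (0 : K →L[ℂ] K) ≤ S := (ContinuousLinearMap.nonneg_iff_isPositive S).mpr hSpos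
  set R : K →L[ℂ] K := CFC.sqrt S with hRdef
  have hR2 : R * R = S := CFC.sqrt_mul_sqrt_self S hS0
  have hRpos : (0 : K →L[ℂ] K) ≤ R := CFC.sqrt_nonneg S
  have hRsa : IsSelfAdjoint R := IsSelfAdjoint.of_nonneg hRpos
  have symR : ∀ x y : K, ⟪R x, y⟫_ℂ = ⟪x, R y⟫_ℂ := fun x y =>
    (ContinuousLinearMap.isSelfAdjoint_iff_isSymmetric.mp hRsa) x y
  have hRR : ∀ f : K, R (R f) = S f := fun f => ContinuousLinearMap.ext_iff.mp hR2 f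
  -- norms agree
  have normRW : ∀ f : K, ‖R f‖ = ‖W f‖ := by
    intro f
    have h1 : (⟪R f, R f⟫_ℂ).re = ‖R f‖ ^ 2 := hfre (R f)
    have h2 : ⟪R f, R f⟫_ℂ = ⟪f, S f⟫_ℂ := by rw [symR f (R f), hRR f]
    have h3 : (⟪f, S f⟫_ℂ).re = ‖W f‖ ^ 2 := by
      rw [← inner_conj_symm f (S f), Complex.conj_re, hSre f]
    have h4 : ‖R f‖ ^ 2 = ‖W f‖ ^ 2 := by rw [← h1, h2, h3]
    have h5 := norm_nonneg (R f)
    have h6 := norm_nonneg (W f)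
    nlinarith
  -- W with codomain Θᗮ
  set WK : K →ₗ[ℂ] ↥Θᗮ := W.codRestrict Θᗮ Wmem with hWK
  have WKapp : ∀ f : K, (WK f : lp (fun _ : J => ℂ) 2) = W f := fun f => rfl
  have WKnorm : ∀ f : K, ‖WK f‖ = ‖R f‖ := fun f => (normRW f).symm
  have hWKext : ∀ {a b : K}, R a = R b → WK a = WK b := by
    intro a b hab
    have h0 : ‖R (a - b)‖ = 0 := by rw [map_sub, hab, sub_self, norm_zero]
    have h1 : ‖WK (a - b)‖ = 0 := by rw [WKnorm, h0]
    have h2 : WK a - WK b = 0 := by rw [← map_sub]; exact norm_eq_zero.mp h1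
    exact sub_eq_zero.mp h2
  -- the isometry on the range of R
  set M : Submodule ℂ K := LinearMap.range (R : K →ₗ[ℂ] K) with hM
  have hsec : ∀ x : ↥M, ∃ g : K, R g = (x : K) := fun x => LinearMap.mem_range.mp x.2
  set pre : ↥M → K := fun x => (hsec x).choose with hpre_def
  have hpre : ∀ x : ↥M, R (pre x) = (x : K) := fun x => (hsec x).choose_spec
  have hWKpre : ∀ (x : ↥M) (g : K), R g = (x : K) → WK (pre x) = WK g := fun x g hg =>
    hWKext (by rw [hpre x, hg])
  set φlin : ↥M →ₗ[ℂ] ↥Θᗮ :=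
    { toFun := fun x => WK (pre x)
      map_add' := by
        intro x y
        show WK (pre (x + y)) = WK (pre x) + WK (pre y)
        rw [hWKpre (x + y) (pre x + pre y)
          (by rw [map_add, hpre, hpre, Submodule.coe_add]), map_add]
      map_smul' := by
        intro c x
        show WK (pre (c • x)) = c • WK (pre x)
        rw [hWKpre (c • x) (c • pre x)
          (by rw [map_smul, hpre, Submodule.coe_smul]), map_smul] } with hφlin
  have φnorm : ∀ x : ↥M, ‖φlin x‖ = ‖x‖ := by
    intro x
    show ‖WK (pre x)‖ = ‖x‖
    rw [WKnorm, hpre x]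
    rfl
  set φiso : ↥M →ₗᵢ[ℂ] ↥Θᗮ := ⟨φlin, φnorm⟩ with hφiso
  set φL := φiso.toContinuousLinearMap with hφL
  -- inclusion of M into its closure
  set N : Submodule ℂ K := M.topologicalClosure with hN
  set ι : ↥M →ₗᵢ[ℂ] ↥N :=
    ⟨Submodule.inclusion M.le_topologicalClosure, fun x => rfl⟩ with hι
  set ιL := ι.toContinuousLinearMap with hιL
  have huni : IsUniformInducing ιL := ι.isometry.isUniformInducing
  have hdense : DenseRange ιL := by
    intro y
    have hy : (y : K) ∈ closure (M : Set K) := M.topologicalClosure_coe ▸ y.2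
    have himg : (Subtype.val '' Set.range (⇑ιL)) = (M : Set K) := by
      ext z
      constructor
      · rintro ⟨w, ⟨x, rfl⟩, rfl⟩
        exact x.2
      · intro hz
        exact ⟨ιL ⟨z, hz⟩, ⟨⟨z, hz⟩, rfl⟩, rfl⟩
    rw [closure_subtype, himg]
    exact hy
  -- extension of φL along ιL
  set Φ := φL.extend ιL with hΦ
  have hΦeq : ∀ x : ↥M, Φ (ιL x) = φL x := fun x =>
    ContinuousLinearMap.extend_eq (f := φL) (e := ιL) hdense huni x
  have hΦnorm : ∀ y : ↥N, ‖Φ y‖ = ‖y‖ := by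
    have h := hdense.equalizer (Φ.continuous.norm) continuous_norm
      (funext fun x => by
        show ‖Φ (ιL x)‖ = ‖ιL x‖
        rw [hΦeq x]
        exact (φnorm x).trans (ι.norm_map x).symm)
    exact fun y => congrFun h y
  set ΦI : ↥N →ₗᵢ[ℂ] ↥Θᗮ := ⟨Φ.toLinearMap, hΦnorm⟩ with hΦI
  -- range of S is contained in M
  have hle : LinearMap.range (S : K →ₗ[ℂ] K) ≤ M := by
    rintro x ⟨g, rfl⟩
    exact ⟨R g, hRR g⟩
  have hle2 : (LinearMap.range (S : K →ₗ[ℂ] K)).topologicalClosure ≤ N :=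
    Submodule.topologicalClosure_mono hle
  exact ⟨part1, ⟨ΦI.comp ⟨Submodule.inclusion hle2, fun x => rfl⟩⟩⟩
end

section
/- Let (e_j)_{j∈J} be a Parseval frame in a complex Hilbert space K with analysis operator θ. Let C be a bounded positive operator on K with bounded inverse such that C ≤ I (i.e., ⟨C f, f⟩ ≤ ‖f‖² for all f) and such that the Hilbert-space dimension of the closure of the range of I − C² is at most the Hilbert-space dimension of the orthogonal complement of the range of θ in ℓ²(J). Then there exists a Parseval frame (e^o_j)_{j∈J} in K such that (C⁻¹ e^o_j)_{j∈J} is a dual frame of (e_j): it is a frame and f = ∑_{j∈J} ⟨f, e_j⟩ (C⁻¹ e^o_j) for all f ∈ K. -/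
open scoped InnerProductSpace

set_option maxHeartbeats 1000000 in
/-- Let `(e j)` be a Parseval frame in `K` whose analysis operator has range `Θ`
in `ℓ²(J)`. Let `C` be a bounded positive operator with bounded inverse `Cinv`, with `C ≤ I`
(i.e. `⟨C f, f⟩ ≤ ‖f‖²` for all `f`), and such that the Hilbert-space dimension of the closure
of the range of `I − C²` is at most that of `Θᗮ` (expressed by a linear isometric embedding).
Then there exists a Parseval frame `(e^o j)` in `K` such that `(Cinv (e^o j))` is a dual frame
of `(e j)`: it is a frame and `f = ∑ j, ⟨f, e_j⟩ (C⁻¹ e^o_j)` for all `f`.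
(The paper's inner product `(f, g)`, linear in the first argument, is `⟪g, f⟫_ℂ`.) -/
theorem statement6
    {K : Type*} [NormedAddCommGroup K] [InnerProductSpace ℂ K] [CompleteSpace K]
    {J : Type*} [Countable J]
    (e : J → K) (hPar : ∀ f : K, HasSum (fun j => ‖⟪e j, f⟫_ℂ‖ ^ 2) (‖f‖ ^ 2))
    (Θ : Submodule ℂ (lp (fun _ : J => ℂ) 2))
    (hΘ : ∀ x : lp (fun _ : J => ℂ) 2, x ∈ Θ ↔ ∃ f : K, ∀ j, x j = ⟪e j, f⟫_ℂ)
    (C Cinv : K →L[ℂ] K) (hC : C.IsPositive)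
    (hCinv₁ : C ∘L Cinv = 1) (hCinv₂ : Cinv ∘L C = 1)
    (hCle : ∀ f : K, (⟪f, C f⟫_ℂ).re ≤ ‖f‖ ^ 2)
    (hdim : Nonempty
      ((LinearMap.range ((1 - C ∘L C : K →L[ℂ] K) : K →ₗ[ℂ] K)).topologicalClosure →ₗᵢ[ℂ] Θᗮ)) :
    ∃ eo : J → K,
      (∀ f : K, HasSum (fun j => ‖⟪eo j, f⟫_ℂ‖ ^ 2) (‖f‖ ^ 2)) ∧
      (∃ A B : ℝ, 0 < A ∧ A ≤ B ∧ ∀ f : K, ∃ s : ℝ,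
        HasSum (fun j => ‖⟪Cinv (eo j), f⟫_ℂ‖ ^ 2) s ∧
        A * ‖f‖ ^ 2 ≤ s ∧ s ≤ B * ‖f‖ ^ 2) ∧
      ∀ f : K, HasSum (fun j => ⟪e j, f⟫_ℂ • Cinv (eo j)) f := by
  classical
  obtain ⟨V⟩ := hdim
  set R : Submodule ℂ K := (LinearMap.range ((1 - C ∘L C : K →L[ℂ] K) : K →ₗ[ℂ] K)).topologicalClosure with hR
  -- helper: equal squares of nonnegatives
  have sq_eq : ∀ a b : ℝ, 0 ≤ a → 0 ≤ b → a ^ 2 = b ^ 2 → a = b := fun a b ha hb h => by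
    rw [← Real.sqrt_sq ha, ← Real.sqrt_sq hb, h]
  -- basic facts about C
  have hCsa : IsSelfAdjoint C := hC.isSelfAdjoint
  have hCsym : ∀ u v : K, ⟪C u, v⟫_ℂ = ⟪u, C v⟫_ℂ := fun u v => by
    conv_lhs => rw [← hCsa.adjoint_eq]
    exact ContinuousLinearMap.adjoint_inner_left _ _ _
  have hCpos : (0 : K →L[ℂ] K) ≤ C := (ContinuousLinearMap.nonneg_iff_isPositive C).mpr hC
  have hCle' : ∀ f : K, RCLike.re ⟪C f, f⟫_ℂ ≤ ‖f‖ ^ 2 := fun f => by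
    rw [inner_re_symm]
    exact hCle f
  have hCle1 : C ≤ 1 := by
    rw [ContinuousLinearMap.le_def]
    refine ⟨ContinuousLinearMap.isSelfAdjoint_iff_isSymmetric.mp ((IsSelfAdjoint.one (K →L[ℂ] K)).sub hCsa), fun x => ?_⟩
    have h1 : ((1 : K →L[ℂ] K) - C) x = x - C x := rfl
    rw [ContinuousLinearMap.reApplyInnerSelf_apply, h1, inner_sub_left, map_sub,
      inner_self_eq_norm_sq (𝕜 := ℂ) x]
    linarith [hCle' x]
  have hnormC : ‖C‖ ≤ 1 := (CStarAlgebra.norm_le_one_iff_of_nonneg C hCpos).mpr hCle1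
  have hCcontr : ∀ f : K, ‖C f‖ ≤ ‖f‖ := fun f => by
    calc ‖C f‖ ≤ ‖C‖ * ‖f‖ := C.le_opNorm f
    _ ≤ 1 * ‖f‖ := mul_le_mul_of_nonneg_right hnormC (norm_nonneg f)
    _ = ‖f‖ := one_mul _
  -- positivity of 1 - C²
  have hQsa : IsSelfAdjoint (1 - C ∘L C : K →L[ℂ] K) := by
    have h : IsSelfAdjoint (C ∘L C) := by
      have h' := hCsa.pow 2
      rwa [sq, ContinuousLinearMap.mul_def] at h'
    exact (IsSelfAdjoint.one (K →L[ℂ] K)).sub h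
  have hQapp : ∀ x : K, (1 - C ∘L C : K →L[ℂ] K) x = x - C (C x) := fun x => rfl
  have hQinner : ∀ x : K,
      (1 - C ∘L C : K →L[ℂ] K).reApplyInnerSelf x = ‖x‖ ^ 2 - ‖C x‖ ^ 2 := by
    intro x
    rw [ContinuousLinearMap.reApplyInnerSelf_apply, hQapp, inner_sub_left, map_sub,
      inner_self_eq_norm_sq (𝕜 := ℂ) x, hCsym (C x) x,
      inner_self_eq_norm_sq (𝕜 := ℂ) (C x)]
  have hQpos : (0 : K →L[ℂ] K) ≤ 1 - C ∘L C := by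
    rw [ContinuousLinearMap.nonneg_iff_isPositive]
    refine ⟨ContinuousLinearMap.isSelfAdjoint_iff_isSymmetric.mp hQsa, fun x => ?_⟩
    have hx := hCcontr x
    rw [hQinner x]
    nlinarith [norm_nonneg (C x), norm_nonneg x]
  -- the square root
  set D : K →L[ℂ] K := CFC.sqrt (1 - C ∘L C : K →L[ℂ] K) with hDdef
  have hDpos : (0 : K →L[ℂ] K) ≤ D := CFC.sqrt_nonneg _
  have hDsa : IsSelfAdjoint D := IsSelfAdjoint.of_nonneg hDpos
  have hDsym : ∀ u v : K, ⟪D u, v⟫_ℂ = ⟪u, D v⟫_ℂ := fun u v => by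
    conv_lhs => rw [← hDsa.adjoint_eq]
    exact ContinuousLinearMap.adjoint_inner_left _ _ _
  have hDD : ∀ x : K, D (D x) = x - C (C x) := by
    intro x
    have h := CFC.sqrt_mul_sqrt_self (1 - C ∘L C : K →L[ℂ] K) hQpos
    have : (D * D) x = (1 - C ∘L C : K →L[ℂ] K) x := by rw [h]
    simpa [ContinuousLinearMap.mul_apply] using this
  have hDnorm : ∀ f : K, ‖D f‖ ^ 2 = ‖f‖ ^ 2 - ‖C f‖ ^ 2 := fun f => by
    have h1 : (⟪D (D f), f⟫_ℂ).re = ‖D f‖ ^ 2 := by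
      rw [hDsym]; exact inner_self_eq_norm_sq (𝕜 := ℂ) (D f)
    have h2 : (⟪D (D f), f⟫_ℂ).re = ‖f‖ ^ 2 - ‖C f‖ ^ 2 := by
      rw [hDD, ← hQapp]; exact hQinner f
    rw [← h1, h2]
  -- range of D lands in R
  have hDmem : ∀ f : K, D f ∈ R := by
    intro f
    rw [hR, ← Submodule.orthogonal_orthogonal_eq_closure]
    rw [Submodule.mem_orthogonal]
    intro g hg
    have hg' : ∀ u : K, ⟪(1 - C ∘L C : K →L[ℂ] K) u, g⟫_ℂ = 0 := fun u =>
      hg _ ⟨u, rfl⟩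
    have hDg : D g = 0 := by
      have h1 : ⟪(1 - C ∘L C : K →L[ℂ] K) g, g⟫_ℂ = 0 := hg' g
      have h2 : ⟪D (D g), g⟫_ℂ = 0 := by rw [hDD, ← hQapp]; exact h1
      rw [hDsym] at h2
      exact inner_self_eq_zero.mp h2
    rw [← hDsym, hDg, inner_zero_left]
  -- squares sum on lp
  have h2r : ((2 : ENNReal).toReal) = ((2 : ℕ) : ℝ) := by norm_num
  have hs : ∀ g : lp (fun _ : J => ℂ) 2, HasSum (fun j => ‖g j‖ ^ 2) (‖g‖ ^ 2) := fun g => by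
    have := lp.hasSum_norm (p := 2) (by norm_num) g
    simpa [h2r, Real.rpow_natCast] using this
  -- the analysis operator θ
  have hmem : ∀ f : K, Memℓp (fun j => ⟪e j, f⟫_ℂ) 2 := fun f =>
    memℓp_gen (by simpa [h2r, Real.rpow_natCast] using (hPar f).summable)
  let θ₀ : K →ₗ[ℂ] lp (fun _ : J => ℂ) 2 :=
    { toFun := fun f => ⟨fun j => ⟪e j, f⟫_ℂ, hmem f⟩
      map_add' := fun f g => by
        ext j
        simp only [lp.coeFn_add, Pi.add_apply]
        exact inner_add_right _ _ _
      map_smul' := fun c f => by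
        ext j
        simp only [lp.coeFn_smul, Pi.smul_apply, RingHom.id_apply]
        exact inner_smul_right _ _ _ }
  have hθ_apply : ∀ (f : K) (j : J), (θ₀ f : ∀ _ : J, ℂ) j = ⟪e j, f⟫_ℂ := fun f j => rfl
  have hθ_norm : ∀ f : K, ‖θ₀ f‖ = ‖f‖ := fun f => by
    refine sq_eq _ _ (norm_nonneg _) (norm_nonneg _) ?_
    exact (hs (θ₀ f)).unique (by simpa [hθ_apply] using hPar f)
  let θ : K →ₗᵢ[ℂ] lp (fun _ : J => ℂ) 2 := ⟨θ₀, hθ_norm⟩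
  have hθ_mem : ∀ f : K, θ f ∈ Θ := fun f => (hΘ _).mpr ⟨f, fun j => rfl⟩
  have hθ_apply' : ∀ (f : K) (j : J), (θ f : ∀ _ : J, ℂ) j = ⟪e j, f⟫_ℂ := fun f j => rfl
  -- the isometry ψ
  have hsub_add : ∀ f g : K, (⟨D (f + g), hDmem _⟩ : R) = ⟨D f, hDmem f⟩ + ⟨D g, hDmem g⟩ := by
    intro f g; ext; simp
  have hsub_smul : ∀ (c : ℂ) (f : K), (⟨D (c • f), hDmem _⟩ : R) = c • ⟨D f, hDmem f⟩ := by
    intro c f; ext; simp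
  let ψ₀ : K →ₗ[ℂ] lp (fun _ : J => ℂ) 2 :=
    { toFun := fun f => θ (C f) + ((V ⟨D f, hDmem f⟩ : Θᗮ) : lp (fun _ : J => ℂ) 2)
      map_add' := fun f g => by
        rw [map_add C, map_add θ, hsub_add f g, map_add V, Submodule.coe_add]
        abel
      map_smul' := fun c f => by
        rw [RingHom.id_apply, map_smul C, map_smul θ, hsub_smul c f, map_smul V,
          Submodule.coe_smul, smul_add] }
  have hψ_norm : ∀ f : K, ‖ψ₀ f‖ = ‖f‖ := by
    intro f
    refine sq_eq _ _ (norm_nonneg _) (norm_nonneg _) ?_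
    have horth : ⟪(θ (C f) : lp (fun _ : J => ℂ) 2),
        ((V ⟨D f, hDmem f⟩ : Θᗮ) : lp (fun _ : J => ℂ) 2)⟫_ℂ = 0 :=
      Submodule.inner_right_of_mem_orthogonal (hθ_mem (C f)) (V _).2
    have h1 : ‖ψ₀ f‖ ^ 2 = ‖θ (C f)‖ ^ 2
        + ‖((V ⟨D f, hDmem f⟩ : Θᗮ) : lp (fun _ : J => ℂ) 2)‖ ^ 2 := by
      have := norm_add_sq (𝕜 := ℂ) (θ (C f))
        ((V ⟨D f, hDmem f⟩ : Θᗮ) : lp (fun _ : J => ℂ) 2)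
      rw [horth] at this
      simp at this ⊢; exact this
    have h2 : ‖((V ⟨D f, hDmem f⟩ : Θᗮ) : lp (fun _ : J => ℂ) 2)‖ = ‖D f‖ := by
      rw [← Submodule.coe_norm, V.norm_map, Submodule.coe_norm]
    rw [h1, h2, θ.norm_map, hDnorm f]
    ring
  let ψ : K →ₗᵢ[ℂ] lp (fun _ : J => ℂ) 2 := ⟨ψ₀, hψ_norm⟩
  let ψL : K →L[ℂ] lp (fun _ : J => ℂ) 2 := ψ.toContinuousLinearMap
  -- the new frame
  set eo : J → K := fun j => ContinuousLinearMap.adjoint ψL (lp.single 2 j 1) with heo_def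
  have hψL_apply : ∀ f : K, ψL f = ψ₀ f := fun f => rfl
  have heo : ∀ (j : J) (f : K), ⟪eo j, f⟫_ℂ = (ψ₀ f : ∀ _ : J, ℂ) j := by
    intro j f
    rw [heo_def]
    rw [ContinuousLinearMap.adjoint_inner_left]
    rw [lp.inner_single_left]
    simp [hψL_apply]
  -- Parseval for eo
  have hParseval : ∀ f : K, HasSum (fun j => ‖⟪eo j, f⟫_ℂ‖ ^ 2) (‖f‖ ^ 2) := by
    intro f
    have := hs (ψ₀ f)
    rw [hψ_norm f] at this
    simpa [heo] using this
  -- adjoint ψL ∘ θ = C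
  have hadj : ∀ f : K, ContinuousLinearMap.adjoint ψL (θ f) = C f := by
    intro f
    refine ext_inner_right ℂ fun g => ?_
    rw [ContinuousLinearMap.adjoint_inner_left]
    have hψg : ψL g = θ (C g) + ((V ⟨D g, hDmem g⟩ : Θᗮ) : lp (fun _ : J => ℂ) 2) := rfl
    rw [hψg, inner_add_right]
    have horth : ⟪(θ f : lp (fun _ : J => ℂ) 2),
        ((V ⟨D g, hDmem g⟩ : Θᗮ) : lp (fun _ : J => ℂ) 2)⟫_ℂ = 0 :=
      Submodule.inner_right_of_mem_orthogonal (hθ_mem f) (V _).2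
    rw [horth, add_zero, θ.inner_map_map, ← hCsym]
  -- reconstruction
  have hrec : ∀ f : K, HasSum (fun j => ⟪e j, f⟫_ℂ • Cinv (eo j)) f := by
    intro f
    have h1 : HasSum (fun j => lp.single 2 j ((θ f : ∀ _ : J, ℂ) j)) (θ f) :=
      lp.hasSum_single (by norm_num) (θ f)
    have h2 := (Cinv ∘L ContinuousLinearMap.adjoint ψL).hasSum h1
    have h3 : (Cinv ∘L ContinuousLinearMap.adjoint ψL) (θ f) = f := by
      rw [ContinuousLinearMap.comp_apply, hadj f, ← ContinuousLinearMap.comp_apply, hCinv₂,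
        ContinuousLinearMap.one_apply]
    rw [h3] at h2
    have h4 : ∀ j : J, (Cinv ∘L ContinuousLinearMap.adjoint ψL) (lp.single 2 j ((θ f : ∀ _ : J, ℂ) j))
        = ⟪e j, f⟫_ℂ • Cinv (eo j) := by
      intro j
      have hsingle : lp.single 2 j ((θ f : ∀ _ : J, ℂ) j)
          = ((θ f : ∀ _ : J, ℂ) j) • lp.single (E := fun _ : J => ℂ) 2 j (1 : ℂ) := by
        rw [← lp.single_smul]
        norm_num
      rw [hsingle, map_smul, hθ_apply']
      rfl
    simpa [h4] using h2
  -- star Cinv = Cinv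
  have hCinv_star : ContinuousLinearMap.adjoint Cinv = Cinv := by
    have hstar : star Cinv * C = 1 := by
      have := congrArg star hCinv₁
      rw [star_one] at this
      calc star Cinv * C = star Cinv * star C := by rw [hCsa.star_eq]
      _ = star (C * Cinv) := (star_mul C Cinv).symm
      _ = 1 := this
    have : star Cinv = Cinv := by
      calc star Cinv = star Cinv * 1 := (mul_one _).symm
      _ = star Cinv * (C * Cinv) := by rw [← hCinv₁]; rfl
      _ = (star Cinv * C) * Cinv := (mul_assoc _ _ _).symm
      _ = 1 * Cinv := by rw [hstar]
      _ = Cinv := one_mul _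
    rw [← ContinuousLinearMap.star_eq_adjoint, this]
  have hCinv_inner : ∀ (x f : K), ⟪Cinv x, f⟫_ℂ = ⟪x, Cinv f⟫_ℂ := fun x f => by
    conv_lhs => rw [← hCinv_star]
    exact ContinuousLinearMap.adjoint_inner_left _ _ _
  -- frame bounds for Cinv ∘ eo
  have hlower : ∀ f : K, ‖f‖ ≤ ‖C‖ * ‖Cinv f‖ := by
    intro f
    have : C (Cinv f) = f := by
      rw [← ContinuousLinearMap.comp_apply, hCinv₁, ContinuousLinearMap.one_apply]
    calc ‖f‖ = ‖C (Cinv f)‖ := by rw [this]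
    _ ≤ ‖C‖ * ‖Cinv f‖ := C.le_opNorm _
  refine ⟨eo, hParseval, ⟨((‖C‖ + 1) ^ 2)⁻¹, (‖Cinv‖ + 1) ^ 2, ?_, ?_, ?_⟩, hrec⟩
  · positivity
  · have h1 : (1 : ℝ) ≤ (‖C‖ + 1) ^ 2 := by nlinarith [norm_nonneg C]
    have h2 : (1 : ℝ) ≤ (‖Cinv‖ + 1) ^ 2 := by nlinarith [norm_nonneg Cinv]
    calc ((‖C‖ + 1) ^ 2)⁻¹ ≤ 1 := by
          rw [inv_le_one_iff₀]; right; exact h1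
    _ ≤ (‖Cinv‖ + 1) ^ 2 := h2
  · intro f
    refine ⟨‖Cinv f‖ ^ 2, ?_, ?_, ?_⟩
    · have := hParseval (Cinv f)
      simpa [hCinv_inner] using this
    · rw [inv_mul_le_iff₀ (by positivity)]
      have := hlower f
      nlinarith [norm_nonneg f, norm_nonneg (Cinv f), norm_nonneg C, norm_nonneg Cinv]
    · have := Cinv.le_opNorm f
      nlinarith [norm_nonneg f, norm_nonneg (Cinv f), norm_nonneg Cinv]
end

section
/- Let H be a complex Hilbert space, K ⊆ H a closed subspace with orthogonal projection P, and (𝐞_j)_{j∈J} an orthonormal basis of H, so that (e_j)_{j∈J} with e_j = P 𝐞_j is a Parseval frame in K. Let C be a bounded positive operator on K with bounded inverse, and let W be a unitary operator on H such that P(W k) = C k for all k ∈ K. Then the family (ψ_j)_{j∈J} defined by ψ_j = C⁻¹ P(W 𝐞_j) is a dual frame of (e_j): it is a frame in K and f = ∑_{j∈J} ⟨f, e_j⟩ ψ_j for all f ∈ K; moreover ψ_j = e_j + C⁻¹ P(W(𝐞_j − e_j)) for every j ∈ J. -/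
open scoped InnerProductSpace

lemma mul_conj_re' (z : ℂ) : (z * (starRingEnd ℂ) z).re = ‖z‖ ^ 2 := by
  simp [Complex.mul_re, Complex.sq_norm, Complex.normSq_apply]

lemma parseval_real {H : Type*} [NormedAddCommGroup H] [InnerProductSpace ℂ H] [CompleteSpace H]
    {J : Type*} (b : HilbertBasis J ℂ H) (x : H) :
    HasSum (fun j => ‖⟪b j, x⟫_ℂ‖ ^ 2) (‖x‖ ^ 2) := by
  have h := (b.hasSum_inner_mul_inner x x).mapL Complex.reCLM
  have h3 : Complex.reCLM ⟪x, x⟫_ℂ = ‖x‖ ^ 2 := inner_self_eq_norm_sq (𝕜 := ℂ) x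
  rw [h3] at h
  refine h.congr_fun fun j => ?_
  have h4 : ⟪b j, x⟫_ℂ = (starRingEnd ℂ) ⟪x, b j⟫_ℂ := (inner_conj_symm (b j) x).symm
  rw [h4, RCLike.norm_conj]
  exact (mul_conj_re' _).symm

set_option maxHeartbeats 1000000 in
/-- Let `H` be a complex Hilbert space, `Ksub ⊆ H` a closed subspace with
orthogonal projection `P`, and `b` an orthonormal basis of `H`, so that `e j = P (b j)` is a
Parseval frame in `Ksub`. Let `C` be a bounded positive operator on `Ksub` with bounded
inverse `Cinv`, and `W` a unitary operator on `H` with `P (W k) = C k` for all `k ∈ Ksub`.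
Then `ψ j = Cinv (P (W (b j)))` is a dual frame of `(e j)`: it is a frame in `Ksub` and
`f = ∑ j, ⟨f, e_j⟩ ψ_j` for all `f ∈ Ksub`; moreover `ψ j = e j + Cinv (P (W (b j − e j)))`.
(The paper's inner product `(f, g)`, linear in the first argument, is `⟪g, f⟫_ℂ`.) -/
theorem statement8
    {H : Type*} [NormedAddCommGroup H] [InnerProductSpace ℂ H] [CompleteSpace H]
    {J : Type*} [Countable J]
    (Ksub : Submodule ℂ H) [CompleteSpace Ksub]
    (b : HilbertBasis J ℂ H)
    (e : J → Ksub) (he : ∀ j, e j = Ksub.orthogonalProjectionOnto (b j))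
    (C Cinv : Ksub →L[ℂ] Ksub) (hC : C.IsPositive)
    (hCinv₁ : C ∘L Cinv = 1) (hCinv₂ : Cinv ∘L C = 1)
    (W : H ≃ₗᵢ[ℂ] H)
    (hW : ∀ k : Ksub, Ksub.orthogonalProjectionOnto (W (k : H)) = C k)
    (ψ : J → Ksub) (hψ : ∀ j, ψ j = Cinv (Ksub.orthogonalProjectionOnto (W (b j)))) :
    (∀ f : Ksub, HasSum (fun j => ‖⟪e j, f⟫_ℂ‖ ^ 2) (‖f‖ ^ 2)) ∧
    (∃ A B : ℝ, 0 < A ∧ A ≤ B ∧ ∀ f : Ksub, ∃ s : ℝ,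
        HasSum (fun j => ‖⟪ψ j, f⟫_ℂ‖ ^ 2) s ∧
        A * ‖f‖ ^ 2 ≤ s ∧ s ≤ B * ‖f‖ ^ 2) ∧
    (∀ f : Ksub, HasSum (fun j => ⟪e j, f⟫_ℂ • ψ j) f) ∧
    ∀ j, ψ j = e j + Cinv (Ksub.orthogonalProjectionOnto (W (b j - (e j : H)))) := by
    -- the inner product identity for e
  have he_inner : ∀ j (f : Ksub), ⟪e j, f⟫_ℂ = ⟪b j, (f : H)⟫_ℂ := fun j f => by
    rw [he j]
    exact Submodule.inner_orthogonalProjectionOnto_eq_of_mem_right (K := Ksub) f (b j)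
  -- Cinv is self-adjoint
  have hCsa : ContinuousLinearMap.adjoint C = C := hC.isSelfAdjoint
  have ha1 : ContinuousLinearMap.adjoint (1 : Ksub →L[ℂ] Ksub) = 1 := by
    rw [← ContinuousLinearMap.star_eq_adjoint, star_one]
  have h1 : ContinuousLinearMap.adjoint Cinv ∘L C = 1 := by
    have := congrArg ContinuousLinearMap.adjoint hCinv₁
    rwa [ContinuousLinearMap.adjoint_comp, hCsa, ha1] at this
  have hCinv_sa : ContinuousLinearMap.adjoint Cinv = Cinv := by
    calc ContinuousLinearMap.adjoint Cinv
        = (ContinuousLinearMap.adjoint Cinv) ∘L (C ∘L Cinv) := by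
          rw [hCinv₁, ContinuousLinearMap.one_def, ContinuousLinearMap.comp_id]
      _ = (ContinuousLinearMap.adjoint Cinv ∘L C) ∘L Cinv := by
          rw [ContinuousLinearMap.comp_assoc]
      _ = Cinv := by rw [h1, ContinuousLinearMap.one_def, ContinuousLinearMap.id_comp]
  have hCinv_inner : ∀ x f : Ksub, ⟪Cinv x, f⟫_ℂ = ⟪x, Cinv f⟫_ℂ := fun x f => by
    conv_lhs => rw [← hCinv_sa]
    exact ContinuousLinearMap.adjoint_inner_left Cinv f x
  -- the inner product identity for ψ
  have hψ_inner : ∀ j (f : Ksub), ⟪ψ j, f⟫_ℂ = ⟪b j, W.symm ((Cinv f : Ksub) : H)⟫_ℂ := by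
    intro j f
    rw [hψ j, hCinv_inner,
      Submodule.inner_orthogonalProjectionOnto_eq_of_mem_right (K := Ksub) (Cinv f) (W (b j))]
    rw [show ((Cinv f : Ksub) : H) = W (W.symm ((Cinv f : Ksub) : H)) by simp,
      LinearIsometryEquiv.inner_map_map]
    simp
  have hCinvC : ∀ x : Ksub, Cinv (C x) = x := fun x => by
    have := congrFun (congrArg DFunLike.coe hCinv₂) x
    simpa using this
  refine ⟨?_, ?_, ?_, ?_⟩
  · -- Parseval frame
    intro f
    have h := parseval_real b (f : H)
    rw [show ‖(f : H)‖ = ‖f‖ from rfl] at h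
    exact h.congr_fun fun j => by rw [he_inner]
  · -- frame bounds for ψ
    refine ⟨((‖C‖ + 1)⁻¹) ^ 2, (‖Cinv‖ + 1) ^ 2, by positivity, ?_, ?_⟩
    · have h1 : (‖C‖ + 1)⁻¹ ≤ 1 := by
        rw [inv_le_one_iff₀]; right; linarith [norm_nonneg C]
      have hA : ((‖C‖ + 1)⁻¹) ^ 2 ≤ 1 := by nlinarith [inv_nonneg.mpr (by positivity : (0:ℝ) ≤ ‖C‖ + 1)]
      have hB : (1 : ℝ) ≤ (‖Cinv‖ + 1) ^ 2 := by nlinarith [norm_nonneg Cinv]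
      linarith
    · intro f
      refine ⟨‖Cinv f‖ ^ 2, ?_, ?_, ?_⟩
      · have h := parseval_real b (W.symm ((Cinv f : Ksub) : H))
        rw [show ‖W.symm ((Cinv f : Ksub) : H)‖ = ‖Cinv f‖ by simp] at h
        exact h.congr_fun fun j => by rw [hψ_inner]
      · have hf : ‖f‖ ≤ (‖C‖ + 1) * ‖Cinv f‖ := by
          have : ‖C (Cinv f)‖ ≤ ‖C‖ * ‖Cinv f‖ := C.le_opNorm _
          have hfe : C (Cinv f) = f := by
            have := congrFun (congrArg DFunLike.coe hCinv₁) f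
            simpa using this
          rw [hfe] at this
          nlinarith [norm_nonneg (Cinv f)]
        have := mul_le_mul hf hf (norm_nonneg f) (by positivity)
        have hpos : (0:ℝ) < ‖C‖ + 1 := by positivity
        rw [show ((‖C‖ + 1)⁻¹) ^ 2 * ‖f‖ ^ 2 = (‖f‖ * ‖f‖) / (‖C‖ + 1)^2 by
          field_simp]
        rw [div_le_iff₀ (by positivity)]
        nlinarith
      · have h := Cinv.le_opNorm f
        have h2 : ‖Cinv f‖ ≤ (‖Cinv‖ + 1) * ‖f‖ := by nlinarith [norm_nonneg f]
        have h3 : ‖Cinv f‖ ^ 2 ≤ ((‖Cinv‖ + 1) * ‖f‖) ^ 2 :=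
          pow_le_pow_left₀ (norm_nonneg _) h2 2
        calc ‖Cinv f‖ ^ 2 ≤ ((‖Cinv‖ + 1) * ‖f‖) ^ 2 := h3
          _ = (‖Cinv‖ + 1) ^ 2 * ‖f‖ ^ 2 := by ring
  · -- reconstruction
    intro f
    have h := (b.hasSum_repr (f : H)).mapL
      (W.toContinuousLinearEquiv.toContinuousLinearMap)
    have h2 := h.mapL (Ksub.orthogonalProjectionOnto)
    have h3 := h2.mapL Cinv
    have hval : Cinv (Ksub.orthogonalProjectionOnto
        (W.toContinuousLinearEquiv.toContinuousLinearMap (f : H))) = f := by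
      have : W.toContinuousLinearEquiv.toContinuousLinearMap (f : H) = W (f : H) := rfl
      rw [this, hW f, hCinvC]
    rw [hval] at h3
    refine h3.congr_fun fun j => ?_
    rw [he_inner, hψ j]
    have hb : b.repr (f : H) j = ⟪b j, (f : H)⟫_ℂ := b.repr_apply_apply _ _
    have : W.toContinuousLinearEquiv.toContinuousLinearMap (b.repr (f:H) j • b j)
        = b.repr (f:H) j • W (b j) := by
      rw [map_smul]; rfl
    rw [this, map_smul, map_smul, hb]
  · -- the formula
    intro j
    have hsplit : Ksub.orthogonalProjectionOnto (W ((b j : H) - ((e j : Ksub) : H)))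
        = Ksub.orthogonalProjectionOnto (W (b j)) - C (e j) := by
      rw [map_sub, map_sub, hW]
    rw [hψ j, hsplit, map_sub, hCinvC]
    abel
end

section
/- Let H be a complex Hilbert space of finite dimension K+1 (K ≥ 1), let (𝐞_j)_{j=1}^{K+1} be an orthonormal basis of H, let K₀ ⊆ H be a K-dimensional subspace with orthogonal projection P, set e_j := P 𝐞_j (a Parseval frame of K₀ with excess one), and let m be a unit vector spanning the orthogonal complement of K₀ in H. Then a family (ψ_j)_{j=1}^{K+1} of vectors of K₀ satisfies f = ∑_{j=1}^{K+1} ⟨f, ψ_j⟩ e_j for all f ∈ K₀ (i.e., is a dual frame of (e_j)) if and only if there exists a vector v ∈ K₀ such that ψ_j = e_j + ⟨𝐞_j, m⟩ v for all j = 1, …, K+1. -/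
open scoped InnerProductSpace

section Aux

variable {H : Type*} [NormedAddCommGroup H] [InnerProductSpace ℂ H] [FiniteDimensional ℂ H]

/-- Coercion of a combination of the projected frame vectors. -/
lemma aux_sum_coe {n : ℕ} (b : OrthonormalBasis (Fin n) ℂ H) (K₀ : Submodule ℂ H)
    (e : Fin n → K₀) (he : ∀ j, e j = Submodule.orthogonalProjectionOnto K₀ (b j))
    (c : Fin n → ℂ) :
    ((∑ j, c j • e j : K₀) : H) = (Submodule.orthogonalProjectionOnto K₀ (∑ j, c j • b j) : H) := by
  rw [map_sum]
  push_cast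
  refine Finset.sum_congr rfl fun j _ => ?_
  rw [he j, (Submodule.orthogonalProjectionOnto K₀).map_smul]
  push_cast
  ring

end Aux

/-- Let `H` be a complex Hilbert space of dimension `K+1` with orthonormal basis
`(b j)`, `K₀` a `K`-dimensional subspace with orthogonal projection `P`, `e j = P (b j)` (a
Parseval frame of `K₀` with excess one), and `m` a unit vector spanning `K₀ᗮ`. Then a family
`(ψ j)` of vectors of `K₀` satisfies `f = ∑ j, ⟨f, ψ_j⟩ e_j` for all `f ∈ K₀` (i.e. is a dual
frame of `(e j)`) iff there is `v ∈ K₀` with `ψ j = e j + ⟨b j, m⟩ v` for all `j`.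
(The paper's inner product `(f, g)`, linear in the first argument, is `⟪g, f⟫_ℂ`.) -/
theorem statement9
    {H : Type*} [NormedAddCommGroup H] [InnerProductSpace ℂ H] [FiniteDimensional ℂ H]
    (K : ℕ) (hK : 1 ≤ K) (hdimH : Module.finrank ℂ H = K + 1)
    (b : OrthonormalBasis (Fin (K + 1)) ℂ H)
    (K₀ : Submodule ℂ H) (hdimK₀ : Module.finrank ℂ K₀ = K)
    (e : Fin (K + 1) → K₀) (he : ∀ j, e j = Submodule.orthogonalProjectionOnto K₀ (b j))
    (m : H) (hm : ‖m‖ = 1) (hmspan : K₀ᗮ = Submodule.span ℂ {m})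
    (ψ : Fin (K + 1) → K₀) :
    (∀ f : K₀, ∑ j, ⟪ψ j, f⟫_ℂ • e j = f) ↔
      ∃ v : K₀, ∀ j, ψ j = e j + ⟪m, b j⟫_ℂ • v := by
  have hmK : m ∈ K₀ᗮ := by
    rw [hmspan]; exact Submodule.mem_span_singleton_self m
  -- inner products of `e j` with elements of `K₀`
  have hinner : ∀ (j : Fin (K + 1)) (f : K₀), ⟪e j, f⟫_ℂ = ⟪b j, (f : H)⟫_ℂ := by
    intro j f
    rw [he j, Submodule.inner_orthogonalProjectionOnto_eq_of_mem_right]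
  -- Parseval identity
  have hpars : ∀ f : K₀, ∑ j, ⟪e j, f⟫_ℂ • e j = f := by
    intro f
    refine Subtype.ext ?_
    rw [aux_sum_coe b K₀ e he]
    have : (∑ j, ⟪e j, f⟫_ℂ • b j) = (f : H) := by
      rw [show (∑ j, ⟪e j, f⟫_ℂ • b j) = ∑ j, ⟪b j, (f : H)⟫_ℂ • b j from
        Finset.sum_congr rfl fun j _ => by rw [hinner], b.sum_repr']
    rw [this, Submodule.orthogonalProjectionOnto_mem_subspace_eq_self f]
  -- the kernel vector
  have hker : (∑ j, ⟪b j, m⟫_ℂ • e j : K₀) = 0 := by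
    refine Subtype.ext ?_
    rw [aux_sum_coe b K₀ e he, b.sum_repr' m]
    exact congrArg Subtype.val (Submodule.orthogonalProjectionOnto_apply_of_mem_orthogonal hmK)
  constructor
  · intro hdual
    -- the difference family lies in the kernel of the synthesis operator
    set d : Fin (K + 1) → K₀ := fun j => ψ j - e j with hd
    have hker' : ∀ f : K₀, ∃ t : ℂ, ∀ j, ⟪d j, f⟫_ℂ = t * ⟪b j, m⟫_ℂ := by
      intro f
      have hsum : (∑ j, ⟪d j, f⟫_ℂ • e j : K₀) = 0 := by
        have : ∑ j, ⟪d j, f⟫_ℂ • e j = ∑ j, ⟪ψ j, f⟫_ℂ • e j - ∑ j, ⟪e j, f⟫_ℂ • e j := by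
          rw [← Finset.sum_sub_distrib]
          refine Finset.sum_congr rfl fun j _ => ?_
          rw [hd]; simp [inner_sub_left, sub_smul]
        rw [this, hdual f, hpars f, sub_self]
      -- the coerced sum is in K₀ᗮ
      have hx : (∑ j, ⟪d j, f⟫_ℂ • b j) ∈ K₀ᗮ := by
        have h0 : (Submodule.orthogonalProjectionOnto K₀ (∑ j, ⟪d j, f⟫_ℂ • b j) : H) = 0 := by
          rw [← aux_sum_coe b K₀ e he, hsum]; rfl
        have := Submodule.orthogonalProjectionOnto_eq_zero_iff (K := K₀)
          (v := ∑ j, ⟪d j, f⟫_ℂ • b j)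
        rw [← this]
        exact_mod_cast h0
      rw [hmspan, Submodule.mem_span_singleton] at hx
      obtain ⟨t, ht⟩ := hx
      refine ⟨t, fun j => ?_⟩
      have : ⟪b j, ∑ i, ⟪d i, f⟫_ℂ • b i⟫_ℂ = ⟪d j, f⟫_ℂ :=
        b.orthonormal.inner_right_fintype _ j
      rw [← this, ← ht, inner_smul_right]
    -- find j0 with nonzero coefficient
    have hj0 : ∃ j0, ⟪b j0, m⟫_ℂ ≠ 0 := by
      by_contra h
      push_neg at h
      have : m = 0 := by
        rw [← b.sum_repr' m]
        simp [h]
      rw [this] at hm; simp at hm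
    obtain ⟨j0, hj0⟩ := hj0
    refine ⟨(⟪m, b j0⟫_ℂ)⁻¹ • d j0, fun j => ?_⟩
    have : ψ j = e j + d j := by simp [hd]
    rw [this]
    congr 1
    refine ext_inner_right ℂ fun f => ?_
    obtain ⟨t, ht⟩ := hker' f
    rw [inner_smul_left, inner_smul_left, ht j, ht j0, map_inv₀, inner_conj_symm,
      inner_conj_symm]
    field_simp
  · rintro ⟨v, hv⟩ f
    have : ∀ j, ⟪ψ j, f⟫_ℂ • e j = ⟪e j, f⟫_ℂ • e j + (⟪b j, m⟫_ℂ * ⟪v, f⟫_ℂ) • e j := by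
      intro j
      rw [hv j, inner_add_left, inner_smul_left, add_smul, inner_conj_symm]
    rw [Finset.sum_congr rfl fun j _ => this j, Finset.sum_add_distrib, hpars f]
    have : ∑ j, (⟪b j, m⟫_ℂ * ⟪v, f⟫_ℂ) • e j = ⟪v, f⟫_ℂ • ∑ j, ⟪b j, m⟫_ℂ • e j := by
      rw [Finset.smul_sum]
      refine Finset.sum_congr rfl fun j _ => ?_
      rw [smul_smul, mul_comm]
    rw [this, hker, smul_zero, add_zero]
end

section
/- Let (𝐛_i)_{i=1}^{K} be an orthonormal basis of a K-dimensional complex Hilbert space K (K ≥ 1). Define e_j := 𝐛_j − (1/K) ∑_{i=1}^{K} 𝐛_i for 1 ≤ j ≤ K and e_{K+1} := (1/√K) ∑_{i=1}^{K} 𝐛_i. Then the K+1 vectors of K ⊕ ℂ given by 𝐞_j := (e_j, 1/√K) for 1 ≤ j ≤ K and 𝐞_{K+1} := (e_{K+1}, 0) form an orthonormal basis of K ⊕ ℂ; in particular (e_j)_{j=1}^{K+1} is a Parseval frame of K and its complementary Parseval frame in ℂ consists of the scalars ẽ_j = 1/√K (j ≤ K) and ẽ_{K+1} = 0. -/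
open scoped InnerProductSpace

/-- Let `(b i)` be an orthonormal basis of a `K`-dimensional complex Hilbert
space `E` (`K ≥ 1`). Define `e j = b j − (1/K) ∑ i, b i` for `j < K` and
`e K = (1/√K) ∑ i, b i`. Then the `K+1` vectors of `E ⊕ ℂ` given by `ee j = (e j, 1/√K)` for
`j < K` and `ee K = (e K, 0)` form an orthonormal basis of `E ⊕ ℂ`; in particular `(e j)` is
a Parseval frame of `E` (with complementary Parseval frame `1/√K, …, 1/√K, 0` in `ℂ`).
(The paper's inner product `(f, g)`, linear in the first argument, is `⟪g, f⟫_ℂ`.) -/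
theorem statement10
    {E : Type*} [NormedAddCommGroup E] [InnerProductSpace ℂ E]
    (K : ℕ) (hK : 1 ≤ K) (b : OrthonormalBasis (Fin K) ℂ E)
    (e : Fin (K + 1) → E)
    (he : ∀ j : Fin K, e j.castSucc = b j - ((K : ℂ))⁻¹ • ∑ i, b i)
    (heL : e (Fin.last K) = ((Real.sqrt K : ℂ))⁻¹ • ∑ i, b i)
    (ee : Fin (K + 1) → WithLp 2 (E × ℂ))
    (hee : ∀ j : Fin K,
      ee j.castSucc = (WithLp.equiv 2 (E × ℂ)).symm (e j.castSucc, ((Real.sqrt K : ℂ))⁻¹))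
    (heeL : ee (Fin.last K) = (WithLp.equiv 2 (E × ℂ)).symm (e (Fin.last K), 0)) :
    Orthonormal ℂ ee ∧ Submodule.span ℂ (Set.range ee) = ⊤ ∧
    ∀ f : E, ∑ j, ‖⟪e j, f⟫_ℂ‖ ^ 2 = ‖f‖ ^ 2 := by
  have hK0 : (K : ℂ) ≠ 0 := Nat.cast_ne_zero.mpr (Nat.one_le_iff_ne_zero.mp hK)
  have hKpos : (0 : ℝ) < K := by exact_mod_cast hK
  have hsK : Real.sqrt K ≠ 0 := by positivity
  have hsKC : ((Real.sqrt K : ℂ)) ≠ 0 := by exact_mod_cast hsK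
  have hconj : (starRingEnd ℂ) ((Real.sqrt K : ℂ))⁻¹ = ((Real.sqrt K : ℂ))⁻¹ := by
    rw [map_inv₀, Complex.conj_ofReal]
  have hconjK : (starRingEnd ℂ) ((K : ℂ))⁻¹ = ((K : ℂ))⁻¹ := by
    rw [map_inv₀, Complex.conj_natCast]
  have hsq : ((Real.sqrt K : ℂ))⁻¹ * ((Real.sqrt K : ℂ))⁻¹ = ((K : ℂ))⁻¹ := by
    rw [← mul_inv, ← Complex.ofReal_mul, Real.mul_self_sqrt (Nat.cast_nonneg K)]
    norm_num
  have hbb : ∀ i j : Fin K, ⟪b i, b j⟫_ℂ = if i = j then 1 else 0 :=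
    orthonormal_iff_ite.mp b.orthonormal
  set s : E := ∑ i, b i with hs
  have hbs : ∀ i : Fin K, ⟪b i, s⟫_ℂ = 1 := by
    intro i
    rw [hs, inner_sum]
    simp_rw [hbb]
    simp
  have hsb : ∀ i : Fin K, ⟪s, b i⟫_ℂ = 1 := by
    intro i
    rw [← inner_conj_symm, hbs]
    simp
  have hss : ⟪s, s⟫_ℂ = (K : ℂ) := by
    have h1 : ⟪s, s⟫_ℂ = ∑ i, ⟪(b i : E), s⟫_ℂ := by
      conv_lhs => rw [hs]
      exact sum_inner _ _ _
    rw [h1]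
    simp_rw [hbs]
    simp
  -- inner products of the `e`'s
  have hEe : ∀ i j : Fin K, ⟪e i.castSucc, e j.castSucc⟫_ℂ
      = (if i = j then 1 else 0) - (K : ℂ)⁻¹ := by
    intro i j
    rw [he i, he j, inner_sub_left, inner_sub_right, inner_sub_right,
      inner_smul_left, inner_smul_right, inner_smul_left, inner_smul_right,
      hbs, hsb, hss, hconjK]
    rw [hbb i j]
    field_simp
    ring
  have hEeL : ∀ i : Fin K, ⟪e i.castSucc, e (Fin.last K)⟫_ℂ = 0 := by
    intro i
    rw [he i, heL, inner_smul_right, inner_sub_left, inner_smul_left,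
      hbs, hss, hconjK]
    field_simp
    simp
  have hELe : ∀ i : Fin K, ⟪e (Fin.last K), e i.castSucc⟫_ℂ = 0 := by
    intro i
    rw [← inner_conj_symm, hEeL]
    simp
  have hELL : ⟪e (Fin.last K), e (Fin.last K)⟫_ℂ = 1 := by
    rw [heL, inner_smul_left, inner_smul_right, hss, hconj, ← mul_assoc, hsq]
    exact inv_mul_cancel₀ hK0
  -- orthonormality
  have hon : Orthonormal ℂ ee := by
    rw [orthonormal_iff_ite]
    intro i j
    induction i using Fin.lastCases with
    | last =>
      induction j using Fin.lastCases with
      | last => simpa [heeL, WithLp.prod_inner_apply] using hELL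
      | cast j =>
        have hne : Fin.last K ≠ j.castSucc := (Fin.castSucc_lt_last j).ne'
        simpa [heeL, hee j, WithLp.prod_inner_apply, hne] using hELe j
    | cast i =>
      induction j using Fin.lastCases with
      | last =>
        have hne : i.castSucc ≠ Fin.last K := (Fin.castSucc_lt_last i).ne
        simpa [heeL, hee i, WithLp.prod_inner_apply, hne] using hEeL i
      | cast j =>
        rw [hee i, hee j]
        simp only [WithLp.prod_inner_apply, WithLp.equiv_symm_apply, WithLp.ofLp_toLp]
        rw [hEe i j, RCLike.inner_apply, hconj, hsq, sub_add_cancel]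
        simp [Fin.castSucc_inj]
  refine ⟨hon, ?_⟩
  have : FiniteDimensional ℂ E := Module.Finite.of_basis b.toBasis
  have hfrE : Module.finrank ℂ E = K := by
    rw [Module.finrank_eq_card_basis b.toBasis, Fintype.card_fin]
  have hfr : Module.finrank ℂ (WithLp 2 (E × ℂ)) = K + 1 := by
    rw [(WithLp.linearEquiv 2 ℂ (E × ℂ)).finrank_eq, Module.finrank_prod, hfrE,
      Module.finrank_self]
  have hspan : Submodule.span ℂ (Set.range ee) = ⊤ := by
    apply hon.linearIndependent.span_eq_top_of_card_eq_finrank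
    rw [Fintype.card_fin, hfr]
  refine ⟨hspan, ?_⟩
  -- Parseval via the orthonormal basis
  let B : OrthonormalBasis (Fin (K + 1)) ℂ (WithLp 2 (E × ℂ)) :=
    OrthonormalBasis.mk hon hspan.ge
  have hB : ∀ j, B j = ee j := fun j => by simp [B]
  intro f
  set F : WithLp 2 (E × ℂ) := (WithLp.equiv 2 (E × ℂ)).symm (f, 0) with hF
  have hFin : ∀ j, ⟪ee j, F⟫_ℂ = ⟪e j, f⟫_ℂ := by
    intro j
    induction j using Fin.lastCases with
    | last => simp [heeL, hF, WithLp.prod_inner_apply]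
    | cast j => simp [hee j, hF, WithLp.prod_inner_apply]
  have key : (∑ j, (‖⟪e j, f⟫_ℂ‖ : ℂ) ^ 2) = (‖f‖ : ℂ) ^ 2 := by
    have h1 := B.sum_inner_mul_inner F F
    have h2 : ∀ j : Fin (K + 1), ⟪F, B j⟫_ℂ * ⟪B j, F⟫_ℂ = (‖⟪e j, f⟫_ℂ‖ : ℂ) ^ 2 := by
      intro j
      rw [← inner_conj_symm, hB, hFin, RCLike.conj_mul]
      norm_cast
    rw [Finset.sum_congr rfl (fun j _ => h2 j)] at h1
    rw [h1, hF]
    simp only [WithLp.prod_inner_apply, WithLp.equiv_symm_apply, WithLp.ofLp_toLp,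
      inner_zero_right, add_zero, inner_self_eq_norm_sq_to_K]
    norm_cast
    rw [WithLp.prod_norm_sq_eq_of_L2]
    simp
  exact_mod_cast key
end

section
/- Let (𝐛_i)_{i=1}^{K} be an orthonormal basis of a K-dimensional complex Hilbert space K (K ≥ 1), and define the Parseval frame e_j := 𝐛_j − (1/K) ∑_{i=1}^{K} 𝐛_i for 1 ≤ j ≤ K and e_{K+1} := (1/√K) ∑_{i=1}^{K} 𝐛_i. Let u ∈ K be a unit vector and ε ∈ (0, 1]. Then the family (ψ_j)_{j=1}^{K+1} defined by ψ_j := e_j + (1/ε)·√((1−ε²)/K)·u for 1 ≤ j ≤ K and ψ_{K+1} := e_{K+1} is a dual frame of (e_j)_{j=1}^{K+1}: it is a frame of K and f = ∑_{j=1}^{K+1} ⟨f, ψ_j⟩ e_j for all f ∈ K. -/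
open scoped InnerProductSpace

/-- Let `(b i)` be an orthonormal basis of a `K`-dimensional complex Hilbert
space `E` (`K ≥ 1`) and let `e j = b j − (1/K) ∑ i, b i` (`j < K`),
`e K = (1/√K) ∑ i, b i` be the finite Casazza–Christensen Parseval frame. Let `u` be a unit
vector and `ε ∈ (0,1]`. Then `ψ j = e j + (1/ε)·√((1−ε²)/K)·u` (`j < K`), `ψ K = e K` is a
dual frame of `(e j)`: it is a frame of `E` and `f = ∑ j, ⟨f, ψ_j⟩ e_j` for all `f`.
(The paper's inner product `(f, g)`, linear in the first argument, is `⟪g, f⟫_ℂ`.) -/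
theorem statement11
    {E : Type*} [NormedAddCommGroup E] [InnerProductSpace ℂ E]
    (K : ℕ) (hK : 1 ≤ K) (b : OrthonormalBasis (Fin K) ℂ E)
    (e : Fin (K + 1) → E)
    (he : ∀ j : Fin K, e j.castSucc = b j - ((K : ℂ))⁻¹ • ∑ i, b i)
    (heL : e (Fin.last K) = ((Real.sqrt K : ℂ))⁻¹ • ∑ i, b i)
    (u : E) (hu : ‖u‖ = 1) (ε : ℝ) (hε0 : 0 < ε) (hε1 : ε ≤ 1)
    (ψ : Fin (K + 1) → E)
    (hψ : ∀ j : Fin K,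
      ψ j.castSucc = e j.castSucc + ((ε⁻¹ * Real.sqrt ((1 - ε ^ 2) / K) : ℝ) : ℂ) • u)
    (hψL : ψ (Fin.last K) = e (Fin.last K)) :
    (∃ A B : ℝ, 0 < A ∧ A ≤ B ∧ ∀ f : E,
      A * ‖f‖ ^ 2 ≤ ∑ j, ‖⟪ψ j, f⟫_ℂ‖ ^ 2 ∧ ∑ j, ‖⟪ψ j, f⟫_ℂ‖ ^ 2 ≤ B * ‖f‖ ^ 2) ∧
    ∀ f : E, ∑ j, ⟪ψ j, f⟫_ℂ • e j = f := by
  have hKc : (K : ℂ) ≠ 0 := Nat.cast_ne_zero.mpr (by omega)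
  have hsK : Real.sqrt K * Real.sqrt K = K := Real.mul_self_sqrt (by positivity)
  set s : E := ∑ i, b i with hs
  -- Parseval-style reconstruction for `e`
  have hrecon_e : ∀ f : E, ∑ j, ⟪e j, f⟫_ℂ • e j = f := by
    intro f
    have hsum : ∑ i : Fin K, ⟪b i, f⟫_ℂ = ⟪s, f⟫_ℂ := (sum_inner Finset.univ b f).symm
    have hrepr : ∑ i : Fin K, ⟪b i, f⟫_ℂ • b i = f := b.sum_repr' f
    rw [Fin.sum_univ_castSucc]
    have h1 : ∑ j : Fin K, ⟪e j.castSucc, f⟫_ℂ • e j.castSucc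
        = f - (K : ℂ)⁻¹ • (⟪s, f⟫_ℂ • s) := by
      simp only [he, ← hs, inner_sub_left, inner_smul_left, map_inv₀, Complex.conj_natCast,
        sub_smul, smul_sub, smul_smul]
      rw [Finset.sum_sub_distrib, Finset.sum_sub_distrib, hrepr, ← Finset.smul_sum, ← hs,
        ← Finset.sum_smul, ← Finset.sum_mul, Finset.sum_sub_distrib, hsum, Finset.sum_const,
        Finset.card_univ, Fintype.card_fin, nsmul_eq_mul]
      match_scalars <;> field_simp <;> ring
    have h2 : ⟪e (Fin.last K), f⟫_ℂ • e (Fin.last K) = (K : ℂ)⁻¹ • (⟪s, f⟫_ℂ • s) := by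
      rw [heL, inner_smul_left, map_inv₀, Complex.conj_ofReal]
      have hinv : ((Real.sqrt K : ℂ))⁻¹ * ((Real.sqrt K : ℂ))⁻¹ = (K : ℂ)⁻¹ := by
        rw [← mul_inv, ← Complex.ofReal_mul, hsK]
        push_cast
        ring
      match_scalars
      linear_combination ⟪s, f⟫_ℂ * hinv
    rw [h1, h2]
    abel
  -- the first `K` frame vectors sum to zero
  have hsum0 : ∑ j : Fin K, e j.castSucc = 0 := by
    simp only [he, ← hs]
    rw [Finset.sum_sub_distrib, ← hs, Finset.sum_const, Finset.card_univ, Fintype.card_fin,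
      ← Nat.cast_smul_eq_nsmul ℂ, smul_smul, mul_inv_cancel₀ hKc, one_smul, sub_self]
  -- reconstruction for `ψ`
  have hreconψ : ∀ f : E, ∑ j, ⟪ψ j, f⟫_ℂ • e j = f := by
    intro f
    rw [Fin.sum_univ_castSucc, hψL]
    have h1 : ∑ j : Fin K, ⟪ψ j.castSucc, f⟫_ℂ • e j.castSucc
        = ∑ j : Fin K, ⟪e j.castSucc, f⟫_ℂ • e j.castSucc := by
      simp only [hψ, inner_add_left, inner_smul_left, add_smul]
      rw [Finset.sum_add_distrib, ← Finset.smul_sum, hsum0, smul_zero, add_zero]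
    have h2 := hrecon_e f
    rw [Fin.sum_univ_castSucc] at h2
    rw [h1, h2]
  refine ⟨?_, hreconψ⟩
  -- frame bounds
  set C : ℝ := ∑ j, ‖e j‖ ^ 2 with hC
  have hC0 : 0 < C := by
    rcases lt_or_eq_of_le (show (0:ℝ) ≤ C from Finset.sum_nonneg fun j _ => by positivity)
      with h | h
    · exact h
    · exfalso
      have he0 : ∀ j : Fin (K + 1), e j = 0 := by
        intro j
        have := (Finset.sum_eq_zero_iff_of_nonneg
          (fun j (_ : j ∈ Finset.univ) => by positivity)).mp h.symm j (Finset.mem_univ j)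
        simpa using this
      have := hrecon_e (b ⟨0, hK⟩)
      simp only [he0, smul_zero, Finset.sum_const_zero] at this
      have hb := b.orthonormal.1 ⟨0, hK⟩
      rw [← this] at hb
      simp at hb
  refine ⟨C⁻¹, C⁻¹ + ∑ j, ‖ψ j‖ ^ 2, by positivity, le_add_of_nonneg_right
    (Finset.sum_nonneg fun j _ => by positivity), fun f => ⟨?_, ?_⟩⟩
  · -- lower bound
    rw [inv_mul_le_iff₀ hC0]
    calc ‖f‖ ^ 2 = ‖∑ j, ⟪ψ j, f⟫_ℂ • e j‖ ^ 2 := by rw [hreconψ f]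
      _ ≤ (∑ j, ‖⟪ψ j, f⟫_ℂ • e j‖) ^ 2 :=
          pow_le_pow_left₀ (norm_nonneg _) (norm_sum_le _ _) 2
      _ = (∑ j, ‖⟪ψ j, f⟫_ℂ‖ * ‖e j‖) ^ 2 := by simp [norm_smul]
      _ ≤ (∑ j, ‖⟪ψ j, f⟫_ℂ‖ ^ 2) * ∑ j, ‖e j‖ ^ 2 :=
          Finset.sum_mul_sq_le_sq_mul_sq _ _ _
      _ = C * ∑ j, ‖⟪ψ j, f⟫_ℂ‖ ^ 2 := by rw [mul_comm, hC]
  · -- upper bound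
    have h1 : ∑ j, ‖⟪ψ j, f⟫_ℂ‖ ^ 2 ≤ (∑ j, ‖ψ j‖ ^ 2) * ‖f‖ ^ 2 := by
      rw [Finset.sum_mul]
      refine Finset.sum_le_sum fun j _ => ?_
      calc ‖⟪ψ j, f⟫_ℂ‖ ^ 2 ≤ (‖ψ j‖ * ‖f‖) ^ 2 :=
            pow_le_pow_left₀ (norm_nonneg _) (norm_inner_le_norm _ _) 2
        _ = ‖ψ j‖ ^ 2 * ‖f‖ ^ 2 := by ring
    nlinarith [sq_nonneg ‖f‖, inv_pos.mpr hC0]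
end

section
/- Let (e_j)_{j∈J} be a Parseval frame in a complex Hilbert space K with J = J₀ ⊔ J₁ where J₁ is finite, let (b_j)_{j∈J₀} be an orthonormal basis of K and T a bounded positive operator on K with bounded inverse such that e_j = T b_j for all j ∈ J₀. Then: (i) for every g ∈ K, ∑_{j∈J₁} ⟨g, e_j⟩ e_j = g − T² g, i.e., the frame operator of the finite family (e_j)_{j∈J₁} is I − T²; and (ii) the linear span M₁ of {e_j : j ∈ J₁} equals the range of I − T², and the orthogonal complement of M₁ in K equals the kernel of I − T². -/
open scoped InnerProductSpace

/-- Let `(e j)`, `j ∈ J₀ ⊔ J₁` with `J₁` finite, be a Parseval frame in a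
complex Hilbert space `K`, `(b j)` (`j ∈ J₀`) an orthonormal basis of `K`, and `T` a bounded
positive operator with bounded inverse such that `e j = T (b j)` for `j ∈ J₀`. Then:
(i) for every `g`, `∑_{j∈J₁} ⟨g, e_j⟩ e_j = g − T² g`, i.e. the frame operator of
`(e j)_{j∈J₁}` is `I − T²`; and (ii) `M₁ = span{e_j : j ∈ J₁}` equals the range of `I − T²`
and `M₁ᗮ` equals the kernel of `I − T²`.
(The paper's inner product `(f, g)`, linear in the first argument, is `⟪g, f⟫_ℂ`.) -/
theorem statement13
    {K : Type*} [NormedAddCommGroup K] [InnerProductSpace ℂ K] [CompleteSpace K]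
    {J₀ J₁ : Type*} [Countable J₀] [Fintype J₁]
    (e : J₀ ⊕ J₁ → K)
    (hPar : ∀ f : K, HasSum (fun j => ‖⟪e j, f⟫_ℂ‖ ^ 2) (‖f‖ ^ 2))
    (b : HilbertBasis J₀ ℂ K)
    (T Tinv : K →L[ℂ] K) (hT : T.IsPositive)
    (hTinv₁ : T ∘L Tinv = 1) (hTinv₂ : Tinv ∘L T = 1)
    (he : ∀ j : J₀, e (Sum.inl j) = T (b j)) :
    (∀ g : K, ∑ j : J₁, ⟪e (Sum.inr j), g⟫_ℂ • e (Sum.inr j) = g - T (T g)) ∧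
    Submodule.span ℂ (Set.range fun j : J₁ => e (Sum.inr j)) =
      LinearMap.range ((1 - T ∘L T : K →L[ℂ] K) : K →ₗ[ℂ] K) ∧
    (Submodule.span ℂ (Set.range fun j : J₁ => e (Sum.inr j)))ᗮ =
      LinearMap.ker ((1 - T ∘L T : K →L[ℂ] K) : K →ₗ[ℂ] K) := by
  have hsa : ∀ x y : K, ⟪T x, y⟫_ℂ = ⟪x, T y⟫_ℂ := fun x y => by
    conv_lhs => rw [← hT.isSelfAdjoint.adjoint_eq]
    exact ContinuousLinearMap.adjoint_inner_left T y x
  -- Scalar (quadratic-form) identity from the Parseval property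
  have hsum : ∀ g : K,
      (∑ j : J₁, ‖⟪e (Sum.inr j), g⟫_ℂ‖ ^ 2) = ‖g‖ ^ 2 - ‖T g‖ ^ 2 := by
    intro g
    set F : J₀ ⊕ J₁ → ℝ := fun j => ‖⟪e j, g⟫_ℂ‖ ^ 2 with hF
    have h0 : HasSum (F ∘ Sum.inl) (‖T g‖ ^ 2) := by
      have hb := b.hasSum_inner_mul_inner (T g) (T g)
      have h2 : HasSum (fun i : J₀ => ((‖⟪b i, T g⟫_ℂ‖ ^ 2 : ℝ) : ℂ)) ((‖T g‖ ^ 2 : ℝ) : ℂ) := by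
        convert hb using 2 with i
        · rfl
        · rw [← inner_conj_symm (T g) (b i)]
          push_cast
          exact (RCLike.conj_mul _).symm
        · rw [inner_self_eq_norm_sq_to_K]
          push_cast
          rfl
      have h3 := (Complex.hasSum_ofReal).mp h2
      convert h3 using 2 with i
      simp only [Function.comp, hF, he, hsa]
    have h1 : HasSum (F ∘ Sum.inr) (∑ j : J₁, F (Sum.inr j)) := hasSum_fintype _
    have e0 : HasSum (F ∘ ((↑) : Set.range (Sum.inl : J₀ → J₀ ⊕ J₁) → _)) (‖T g‖ ^ 2) := by
      rw [← (Equiv.ofInjective Sum.inl Sum.inl_injective).hasSum_iff]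
      exact h0
    have e1 : HasSum (F ∘ ((↑) : Set.range (Sum.inr : J₁ → J₀ ⊕ J₁) → _))
        (∑ j : J₁, F (Sum.inr j)) := by
      rw [← (Equiv.ofInjective Sum.inr Sum.inr_injective).hasSum_iff]
      exact h1
    have htot := e0.add_isCompl Set.isCompl_range_inl_range_inr e1
    have huniq := htot.unique (hPar g)
    have : F ∘ Sum.inr = fun j : J₁ => ‖⟪e (Sum.inr j), g⟫_ℂ‖ ^ 2 := rfl
    simp only [hF] at huniq ⊢
    linarith
  -- The finite-family frame operator as a continuous linear map
  set S : K →L[ℂ] K :=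
    ∑ j : J₁, ContinuousLinearMap.smulRight (innerSL ℂ (e (Sum.inr j))) (e (Sum.inr j)) with hS
  have hSapp : ∀ g : K, S g = ∑ j : J₁, ⟪e (Sum.inr j), g⟫_ℂ • e (Sum.inr j) := by
    intro g
    simp [hS, ContinuousLinearMap.sum_apply]
  have hinner : ∀ g : K,
      ⟪S g, g⟫_ℂ = ((∑ j : J₁, ‖⟪e (Sum.inr j), g⟫_ℂ‖ ^ 2 : ℝ) : ℂ) := by
    intro g
    rw [hSapp, sum_inner]
    push_cast
    refine Finset.sum_congr rfl fun j _ => ?_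
    rw [inner_smul_left]
    push_cast
    exact RCLike.conj_mul _
  -- Part (i)
  have hmain : ∀ g : K, S g = g - T (T g) := by
    have hz : (↑(S - (1 - T ∘L T)) : K →ₗ[ℂ] K) = 0 := by
      rw [← inner_map_self_eq_zero]
      intro x
      have h1 : ⟪T (T x), x⟫_ℂ = ((‖T x‖ ^ 2 : ℝ) : ℂ) := by
        rw [hsa, inner_self_eq_norm_sq_to_K]
        push_cast
        rfl
      simp only [ContinuousLinearMap.coe_coe, ContinuousLinearMap.sub_apply,
        ContinuousLinearMap.one_apply, ContinuousLinearMap.comp_apply,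
        inner_sub_left, hinner, hsum x, h1, inner_self_eq_norm_sq_to_K]
      push_cast
      exact sub_self _
    intro g
    have hg := LinearMap.congr_fun hz g
    simpa [sub_eq_zero] using hg
  have parti : ∀ g : K, ∑ j : J₁, ⟪e (Sum.inr j), g⟫_ℂ • e (Sum.inr j) = g - T (T g) := by
    intro g
    rw [← hSapp, hmain]
  -- S equals 1 - T²
  have hSeq : S = (1 - T ∘L T : K →L[ℂ] K) := by
    ext g
    simp [hmain g]
  set p : Submodule ℂ K := Submodule.span ℂ (Set.range fun j : J₁ => e (Sum.inr j)) with hp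
  have hfin : FiniteDimensional ℂ p := FiniteDimensional.span_of_finite ℂ (Set.finite_range _)
  -- kernel characterization
  have hker : ∀ g : K, S g = 0 ↔ ∀ j : J₁, ⟪e (Sum.inr j), g⟫_ℂ = 0 := by
    intro g
    constructor
    · intro h
      have h0 : ((∑ j : J₁, ‖⟪e (Sum.inr j), g⟫_ℂ‖ ^ 2 : ℝ) : ℂ) = 0 := by
        rw [← hinner, h, inner_zero_left]
      have h0' : (∑ j : J₁, ‖⟪e (Sum.inr j), g⟫_ℂ‖ ^ 2 : ℝ) = 0 := by exact_mod_cast h0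
      have := (Finset.sum_eq_zero_iff_of_nonneg
        (fun j _ => sq_nonneg ‖⟪e (Sum.inr j), g⟫_ℂ‖)).mp h0'
      intro j
      have hj := this j (Finset.mem_univ j)
      have : ‖⟪e (Sum.inr j), g⟫_ℂ‖ = 0 := by
        nlinarith [norm_nonneg ⟪e (Sum.inr j), g⟫_ℂ]
      exact norm_eq_zero.mp this
    · intro h
      rw [hSapp]
      simp [h]
  have hmemp : ∀ j : J₁, e (Sum.inr j) ∈ p :=
    fun j => Submodule.subset_span (Set.mem_range_self j)
  -- orthogonal complement equals kernel
  have hperp : pᗮ = LinearMap.ker ((1 - T ∘L T : K →L[ℂ] K) : K →ₗ[ℂ] K) := by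
    ext g
    rw [LinearMap.mem_ker]
    have hval : ((1 - T ∘L T : K →L[ℂ] K) : K →ₗ[ℂ] K) g = S g := by rw [ContinuousLinearMap.coe_coe, hSeq]
    rw [hval, hker g]
    constructor
    · intro hg j
      exact Submodule.inner_right_of_mem_orthogonal (hmemp j) hg
    · intro hg
      have horth : p ⟂ Submodule.span ℂ ({g} : Set K) := by
        rw [hp]
        refine Submodule.isOrtho_span.mpr ?_
        rintro u ⟨j, rfl⟩ v (rfl : v = g)
        exact hg j
      exact horth.symm (Submodule.mem_span_singleton_self g)
  refine ⟨parti, ?_, hperp⟩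
  -- range equals the span
  apply le_antisymm
  · -- p ≤ range
    intro x hx
    -- restrict S to p; it is injective there, hence surjective
    have hmapsTo : ∀ y ∈ p, S y ∈ p := by
      intro y _
      rw [hSapp]
      exact Submodule.sum_mem _ fun j _ => Submodule.smul_mem _ _ (hmemp j)
    set L : p →ₗ[ℂ] p := (S : K →ₗ[ℂ] K).restrict hmapsTo with hL
    have hinj : Function.Injective L := by
      rw [← LinearMap.ker_eq_bot, eq_bot_iff]
      rintro ⟨v, hv⟩ hker'
      have hv0 : S v = 0 := by
        have := congrArg (Subtype.val) (LinearMap.mem_ker.mp hker')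
        exact this
      have hvperp : v ∈ pᗮ := by
        rw [hperp, LinearMap.mem_ker]
        rw [hSeq] at hv0
        exact hv0
      have : v = 0 := by
        have := Submodule.inf_orthogonal_eq_bot p
        have hm : v ∈ p ⊓ pᗮ := ⟨hv, hvperp⟩
        rw [this] at hm
        exact hm
      simp [Submodule.mem_bot, this]
    have hsurj : Function.Surjective L := (LinearMap.injective_iff_surjective).mp hinj
    obtain ⟨⟨y, hy⟩, hLy⟩ := hsurj ⟨x, hx⟩
    refine ⟨y, ?_⟩
    have : S y = x := congrArg Subtype.val hLy
    rw [← hSeq]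
    exact this
  · -- range ≤ p
    rintro x ⟨g, rfl⟩
    have : ((1 - T ∘L T : K →L[ℂ] K) : K →ₗ[ℂ] K) g = S g := by rw [ContinuousLinearMap.coe_coe, hSeq]
    rw [this, hSapp]
    exact Submodule.sum_mem _ fun j _ => Submodule.smul_mem _ _ (hmemp j)
end

section
/- Let (e_j)_{j∈J} be a Parseval frame in a complex Hilbert space K with J = J₀ ⊔ J₁ where J₁ is finite, let (b_j)_{j∈J₀} be an orthonormal basis of K and T a bounded positive operator on K with bounded inverse such that e_j = T b_j for all j ∈ J₀ (so that T ≤ I and T⁻² − I ≥ 0). Then the family of vectors 𝐞_j := (e_j, (T⁻² − I)^{1/2} e_j) ∈ K ⊕ K, j ∈ J₀, is orthonormal: ⟨e_j, e_k⟩ + ⟨(T⁻² − I)^{1/2} e_j, (T⁻² − I)^{1/2} e_k⟩ = δ_{jk} for all j, k ∈ J₀. -/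
open scoped InnerProductSpace

/-- Let `(e j)`, `j ∈ J₀ ⊔ J₁` with `J₁` finite, be a Parseval frame in a
complex Hilbert space `K`, `(b j)` (`j ∈ J₀`) an orthonormal basis of `K`, and `T` a bounded
positive operator with bounded inverse `Tinv` such that `e j = T (b j)` for `j ∈ J₀`. Let
`R = (T⁻² − I)^{1/2}` be the positive square root of `T⁻² − I`. Then the family
`(e j, R (e j)) ∈ K ⊕ K`, `j ∈ J₀`, is orthonormal with respect to the inner product
`⟨(f₁,g₁),(f₂,g₂)⟩ = ⟨f₁,f₂⟩ + ⟨g₁,g₂⟩`. -/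
theorem statement14
    {K : Type*} [NormedAddCommGroup K] [InnerProductSpace ℂ K] [CompleteSpace K]
    {J₀ J₁ : Type*} [Countable J₀] [Fintype J₁] [DecidableEq J₀]
    (e : J₀ ⊕ J₁ → K)
    (hPar : ∀ f : K, HasSum (fun j => ‖⟪e j, f⟫_ℂ‖ ^ 2) (‖f‖ ^ 2))
    (b : HilbertBasis J₀ ℂ K)
    (T Tinv : K →L[ℂ] K) (hT : T.IsPositive)
    (hTinv₁ : T ∘L Tinv = 1) (hTinv₂ : Tinv ∘L T = 1)
    (he : ∀ j : J₀, e (Sum.inl j) = T (b j))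
    (R : K →L[ℂ] K) (hR : R.IsPositive) (hR2 : R ∘L R = Tinv ∘L Tinv - 1) :
    ∀ j k : J₀,
      ⟪e (Sum.inl j), e (Sum.inl k)⟫_ℂ + ⟪R (e (Sum.inl j)), R (e (Sum.inl k))⟫_ℂ =
        if j = k then 1 else 0 := by
  intro j k
  have hRadj : ContinuousLinearMap.adjoint R = R :=
    ContinuousLinearMap.isSelfAdjoint_iff'.mp hR.isSelfAdjoint
  have hTadj : ContinuousLinearMap.adjoint T = T :=
    ContinuousLinearMap.isSelfAdjoint_iff'.mp hT.isSelfAdjoint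
  have hTinvadj : ContinuousLinearMap.adjoint Tinv = Tinv := by
    have h := congrArg ContinuousLinearMap.adjoint hTinv₁
    rw [ContinuousLinearMap.adjoint_comp, hTadj] at h
    rw [ContinuousLinearMap.one_def, ContinuousLinearMap.adjoint_id] at h
    calc ContinuousLinearMap.adjoint Tinv
        = (ContinuousLinearMap.adjoint Tinv ∘L T) ∘L Tinv := by
          rw [ContinuousLinearMap.comp_assoc, hTinv₁]; exact (mul_one _).symm
      _ = Tinv := by rw [h]; exact ContinuousLinearMap.id_comp Tinv
  have h1 : ⟪R (e (Sum.inl j)), R (e (Sum.inl k))⟫_ℂ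
      = ⟪e (Sum.inl j), (R ∘L R) (e (Sum.inl k))⟫_ℂ := by
    rw [ContinuousLinearMap.comp_apply, ← ContinuousLinearMap.adjoint_inner_right R, hRadj]
  have hb : ∀ m : J₀, Tinv (T (b m)) = b m := fun m => by
    have := congrFun (congrArg DFunLike.coe hTinv₂) (b m)
    simpa using this
  rw [h1, hR2]
  simp only [ContinuousLinearMap.sub_apply, ContinuousLinearMap.comp_apply,
    ContinuousLinearMap.one_apply, inner_sub_right, he, hb]
  ring_nf
  rw [← ContinuousLinearMap.adjoint_inner_left Tinv, hTinvadj, hb]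
  exact orthonormal_iff_ite.mp b.orthonormal j k
end

section
/- Let (e_j)_{j∈J} be a Parseval frame in a complex Hilbert space K with J = J₀ ⊔ J₁ where J₁ is finite, let (b_j)_{j∈J₀} be an orthonormal basis of K and T a bounded positive operator on K with bounded inverse such that e_j = T b_j for all j ∈ J₀, and let M₁ := span{e_j : j ∈ J₁} (a finite-dimensional subspace equal to the range of I − T²). In the Hilbert space H′ := K ⊕ M₁, let L₀ be the closed subspace spanned by the orthonormal family 𝐞_j := (e_j, (T⁻² − I)^{1/2} e_j), j ∈ J₀. Then the orthogonal complement of L₀ in H′ equals { (−(T⁻² − I)^{1/2} r, r) : r ∈ M₁ }. -/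
open scoped InnerProductSpace

/-- Near-Riesz basis setting: `(e j)`, `j ∈ J₀ ⊔ J₁` with `J₁` finite, is a
Parseval frame in `K`, `(b j)` an orthonormal basis with `e j = T (b j)` for `j ∈ J₀` (`T`
positive with bounded inverse `Tinv`), `M₁ = span{e_j : j ∈ J₁}`, and
`R = (T⁻² − I)^{1/2}`. In `H′ = K ⊕ M₁`, a vector `(f, g)` (with `g ∈ M₁`) lies in the
orthogonal complement of the closed subspace `L₀` spanned by the orthonormal family
`(e j, R (e j))`, `j ∈ J₀` — equivalently, it is orthogonal to each of these generators —
iff `(f, g) = (−R r, r)` for some `r ∈ M₁`. -/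
theorem statement15
    {K : Type*} [NormedAddCommGroup K] [InnerProductSpace ℂ K] [CompleteSpace K]
    {J₀ J₁ : Type*} [Countable J₀] [Fintype J₁]
    (e : J₀ ⊕ J₁ → K)
    (hPar : ∀ f : K, HasSum (fun j => ‖⟪e j, f⟫_ℂ‖ ^ 2) (‖f‖ ^ 2))
    (b : HilbertBasis J₀ ℂ K)
    (T Tinv : K →L[ℂ] K) (hT : T.IsPositive)
    (hTinv₁ : T ∘L Tinv = 1) (hTinv₂ : Tinv ∘L T = 1)
    (he : ∀ j : J₀, e (Sum.inl j) = T (b j))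
    (R : K →L[ℂ] K) (hR : R.IsPositive) (hR2 : R ∘L R = Tinv ∘L Tinv - 1)
    (M₁ : Submodule ℂ K)
    (hM₁ : M₁ = Submodule.span ℂ (Set.range fun j : J₁ => e (Sum.inr j))) :
    ∀ f g : K, g ∈ M₁ →
      ((∀ j : J₀, ⟪e (Sum.inl j), f⟫_ℂ + ⟪R (e (Sum.inl j)), g⟫_ℂ = 0) ↔
        ∃ r ∈ M₁, f = -(R r) ∧ g = r) := by
  intro f g hg
  have hRsa : ∀ x y : K, ⟪R x, y⟫_ℂ = ⟪x, R y⟫_ℂ := by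
    intro x y
    rw [← ContinuousLinearMap.adjoint_inner_left, hR.isSelfAdjoint.adjoint_eq]
  have hTsa : ∀ x y : K, ⟪T x, y⟫_ℂ = ⟪x, T y⟫_ℂ := by
    intro x y
    rw [← ContinuousLinearMap.adjoint_inner_left, hT.isSelfAdjoint.adjoint_eq]
  constructor
  · intro h
    refine ⟨g, hg, ?_, rfl⟩
    have key : ∀ j : J₀, ⟪b j, T (f + R g)⟫_ℂ = 0 := by
      intro j
      have hj := h j
      rw [he j, hRsa] at hj
      rw [← hTsa, inner_add_right]
      exact hj
    have hz : T (f + R g) = 0 := by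
      have hrepr : b.repr (T (f + R g)) = 0 := by
        ext j
        have h0 : (↑(0 : lp (fun _ : J₀ => ℂ) 2) : J₀ → ℂ) j = 0 := rfl
        rw [h0, b.repr_apply_apply]
        exact key j
      simpa using congrArg b.repr.symm hrepr
    have h0 : f + R g = 0 := by
      calc f + R g = (Tinv ∘L T) (f + R g) := by rw [hTinv₂]; rfl
        _ = Tinv 0 := congrArg Tinv hz
        _ = 0 := map_zero _
    exact eq_neg_of_add_eq_zero_left h0
  · rintro ⟨r, hr, rfl, rfl⟩
    intro j
    rw [he j, hRsa]
    simp [inner_neg_right]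
end

section
/- Let (e_j)_{j∈J} be a Parseval frame in a complex Hilbert space K with J = J₀ ⊔ J₁ where J₁ is finite, let (b_j)_{j∈J₀} be an orthonormal basis of K and T a bounded positive operator on K with bounded inverse such that e_j = T b_j for all j ∈ J₀, and let M₁ := span{e_j : j ∈ J₁}. Then for each j ∈ J₁ there is a unique s_j ∈ M₁ with (T⁻² − I)^{1/2} s_j = e_j, and the family in K ⊕ M₁ consisting of the vectors (e_j, (T⁻² − I)^{1/2} e_j) for j ∈ J₀ together with the vectors (e_j, −s_j) for j ∈ J₁ is a Parseval frame of K ⊕ M₁. -/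
open scoped InnerProductSpace

section Helpers

variable {K : Type*} [NormedAddCommGroup K] [InnerProductSpace ℂ K]

/-- HasSum over a sum type from HasSums of the two pieces. -/
lemma hasSum_sumElim' {J₀ J₁ : Type*} {M : Type*} [AddCommMonoid M] [TopologicalSpace M]
    [ContinuousAdd M] {f : J₀ → M} {g : J₁ → M} {a c : M}
    (hf : HasSum f a) (hg : HasSum g c) : HasSum (Sum.elim f g : J₀ ⊕ J₁ → M) (a + c) := by
  apply HasSum.add_isCompl (Set.isCompl_range_inl_range_inr (α := J₀) (β := J₁))
  · exact (Sum.inl_injective.hasSum_range_iff).mpr hf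
  · exact (Sum.inr_injective.hasSum_range_iff).mpr hg

/-- Parseval identity for a Hilbert basis, in norm-squared form. -/
lemma hilbertBasis_parseval' [CompleteSpace K] {J₀ : Type*} (b : HilbertBasis J₀ ℂ K) (u : K) :
    HasSum (fun j : J₀ => ‖⟪b j, u⟫_ℂ‖ ^ 2) (‖u‖ ^ 2) := by
  have h0 := (b.hasSum_inner_mul_inner u u).mapL Complex.reCLM
  have h1 : (fun j : J₀ => Complex.reCLM (⟪u, b j⟫_ℂ * ⟪b j, u⟫_ℂ))
      = fun j : J₀ => ‖⟪b j, u⟫_ℂ‖ ^ 2 := by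
    funext j
    rw [show ⟪u, b j⟫_ℂ = (starRingEnd ℂ) ⟪b j, u⟫_ℂ from (inner_conj_symm _ _).symm,
      RCLike.conj_mul]
    norm_cast
  have h2 : Complex.reCLM ⟪u, u⟫_ℂ = ‖u‖ ^ 2 := inner_self_eq_norm_sq (𝕜 := ℂ) u
  rw [h1, h2] at h0
  exact h0

/-- A symmetric nonnegative operator with vanishing quadratic form at `f` kills `f`. -/
lemma pos_app_zero' (A : K →L[ℂ] K)
    (hsym : ∀ x y : K, ⟪A x, y⟫_ℂ = ⟪x, A y⟫_ℂ)
    (hpos : ∀ x : K, 0 ≤ Complex.re ⟪A x, x⟫_ℂ)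
    (f : K) (h : Complex.re ⟪A f, f⟫_ℂ = 0) : A f = 0 := by
  set x : ℝ := ‖A f‖ ^ 2 with hx
  set C : ℝ := Complex.re ⟪A (A f), A f⟫_ℂ with hC
  have hxnn : 0 ≤ x := by positivity
  have hCnn : 0 ≤ C := hpos (A f)
  have hAA : Complex.re ⟪A f, A f⟫_ℂ = x := inner_self_eq_norm_sq (𝕜 := ℂ) (A f)
  have key : ∀ t : ℝ, 0 ≤ 2 * t * x + t ^ 2 * C := by
    intro t
    have h0 := hpos (f + (t : ℂ) • A f)
    have hexp : ⟪A (f + (t : ℂ) • A f), f + (t : ℂ) • A f⟫_ℂ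
        = ⟪A f, f⟫_ℂ + (t : ℂ) * ⟪A f, A f⟫_ℂ + (t : ℂ) * ⟪A (A f), f⟫_ℂ
          + (t : ℂ) * (t : ℂ) * ⟪A (A f), A f⟫_ℂ := by
      rw [map_add, map_smul, inner_add_left, inner_add_right, inner_add_right,
        inner_smul_left, inner_smul_right, inner_smul_left, inner_smul_right]
      simp only [Complex.conj_ofReal]
      ring
    have hsf : ⟪A (A f), f⟫_ℂ = ⟪A f, A f⟫_ℂ := hsym (A f) f
    rw [hexp, hsf] at h0
    simp only [Complex.add_re, Complex.mul_re, Complex.ofReal_re, Complex.ofReal_im,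
      zero_mul, sub_zero, Complex.mul_im, zero_add, add_zero] at h0
    rw [h, hAA] at h0
    nlinarith [h0]
  have hx0 : x = 0 := by
    by_contra hne
    have hxpos : 0 < x := lt_of_le_of_ne hxnn (Ne.symm hne)
    have hC1 : 0 < C + 1 := by linarith
    have hk := key (-x / (C + 1))
    have h2 : 2 * (-x / (C + 1)) * x + (-x / (C + 1)) ^ 2 * C
        = (-2 * x ^ 2 * (C + 1) + x ^ 2 * C) / (C + 1) ^ 2 := by
      field_simp
    rw [h2] at hk
    have h3 : 0 ≤ -2 * x ^ 2 * (C + 1) + x ^ 2 * C := by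
      by_contra hneg
      push_neg at hneg
      have : (-2 * x ^ 2 * (C + 1) + x ^ 2 * C) / (C + 1) ^ 2 < 0 :=
        div_neg_of_neg_of_pos hneg (by positivity)
      linarith
    nlinarith
  have hn : ‖A f‖ = 0 := by nlinarith [norm_nonneg (A f)]
  exact norm_eq_zero.mp hn

end Helpers

theorem statement16
    {K : Type*} [NormedAddCommGroup K] [InnerProductSpace ℂ K] [CompleteSpace K]
    {J₀ J₁ : Type*} [Countable J₀] [Fintype J₁]
    (e : J₀ ⊕ J₁ → K)
    (hPar : ∀ f : K, HasSum (fun j => ‖⟪e j, f⟫_ℂ‖ ^ 2) (‖f‖ ^ 2))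
    (b : HilbertBasis J₀ ℂ K)
    (T Tinv : K →L[ℂ] K) (hT : T.IsPositive)
    (hTinv₁ : T ∘L Tinv = 1) (hTinv₂ : Tinv ∘L T = 1)
    (he : ∀ j : J₀, e (Sum.inl j) = T (b j))
    (R : K →L[ℂ] K) (hR : R.IsPositive) (hR2 : R ∘L R = Tinv ∘L Tinv - 1)
    (M₁ : Submodule ℂ K)
    (hM₁ : M₁ = Submodule.span ℂ (Set.range fun j : J₁ => e (Sum.inr j))) :
    (∀ j : J₁, ∃! s : K, s ∈ M₁ ∧ R s = e (Sum.inr j)) ∧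
    ∀ s : J₁ → K, (∀ j, s j ∈ M₁ ∧ R (s j) = e (Sum.inr j)) →
      ∀ f g : K, g ∈ M₁ →
        HasSum (fun j : J₀ ⊕ J₁ =>
          ‖Sum.elim
              (fun j₀ : J₀ => ⟪e (Sum.inl j₀), f⟫_ℂ + ⟪R (e (Sum.inl j₀)), g⟫_ℂ)
              (fun j₁ : J₁ => ⟪e (Sum.inr j₁), f⟫_ℂ + ⟪-(s j₁), g⟫_ℂ) j‖ ^ 2)
          (‖f‖ ^ 2 + ‖g‖ ^ 2) := by
  have symT : ∀ x y : K, ⟪T x, y⟫_ℂ = ⟪x, T y⟫_ℂ :=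
    fun x y => hT.1 x y
  have symR : ∀ x y : K, ⟪R x, y⟫_ℂ = ⟪x, R y⟫_ℂ :=
    fun x y => hR.1 x y
  have hTi : ∀ y : K, T (Tinv y) = y := fun y => by
    have := congrArg (fun S : K →L[ℂ] K => S y) hTinv₁; simpa using this
  have hiT : ∀ y : K, Tinv (T y) = y := fun y => by
    have := congrArg (fun S : K →L[ℂ] K => S y) hTinv₂; simpa using this
  have hRR : ∀ y : K, R (R y) = Tinv (Tinv y) - y := fun y => by
    have := congrArg (fun S : K →L[ℂ] K => S y) hR2
    simpa using this
  have symTinv : ∀ x y : K, ⟪Tinv x, y⟫_ℂ = ⟪x, Tinv y⟫_ℂ := by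
    intro x y
    calc ⟪Tinv x, y⟫_ℂ = ⟪Tinv x, T (Tinv y)⟫_ℂ := by rw [hTi]
      _ = ⟪T (Tinv x), Tinv y⟫_ℂ := (symT _ _).symm
      _ = ⟪x, Tinv y⟫_ℂ := by rw [hTi]
  -- key1 : finite J₁-sum identity
  have key1 : ∀ f : K,
      (∑ j : J₁, ‖⟪e (Sum.inr j), f⟫_ℂ‖ ^ 2) = ‖f‖ ^ 2 - ‖T f‖ ^ 2 := by
    intro f
    have hb : HasSum (fun j₀ : J₀ => ‖⟪e (Sum.inl j₀), f⟫_ℂ‖ ^ 2) (‖T f‖ ^ 2) := by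
      have h0 := hilbertBasis_parseval' b (T f)
      have heq : (fun j₀ : J₀ => ‖⟪e (Sum.inl j₀), f⟫_ℂ‖ ^ 2)
          = fun j₀ : J₀ => ‖⟪b j₀, T f⟫_ℂ‖ ^ 2 := by
        funext j; rw [he j, symT]
      rw [heq]; exact h0
    have hfin : HasSum (fun j₁ : J₁ => ‖⟪e (Sum.inr j₁), f⟫_ℂ‖ ^ 2)
        (∑ j : J₁, ‖⟪e (Sum.inr j), f⟫_ℂ‖ ^ 2) := hasSum_fintype _
    have htot := hasSum_sumElim' hb hfin
    have heq : (fun j : J₀ ⊕ J₁ => ‖⟪e j, f⟫_ℂ‖ ^ 2)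
        = Sum.elim (fun j₀ : J₀ => ‖⟪e (Sum.inl j₀), f⟫_ℂ‖ ^ 2)
            (fun j₁ : J₁ => ‖⟪e (Sum.inr j₁), f⟫_ℂ‖ ^ 2) := by
      funext j; cases j <;> rfl
    have hP := hPar f
    rw [heq] at hP
    have huni := htot.unique hP
    linarith
  -- the operator A = 1 - T ∘ T
  set A : K →L[ℂ] K := 1 - T ∘L T with hA
  have hAapp : ∀ x : K, A x = x - T (T x) := fun x => rfl
  have symA : ∀ x y : K, ⟪A x, y⟫_ℂ = ⟪x, A y⟫_ℂ := by
    intro x y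
    rw [hAapp, hAapp, inner_sub_left, inner_sub_right, symT, symT]
  have hreA : ∀ x : K, Complex.re ⟪A x, x⟫_ℂ = ‖x‖ ^ 2 - ‖T x‖ ^ 2 := by
    intro x
    rw [hAapp, inner_sub_left, Complex.sub_re]
    have h1 : Complex.re ⟪x, x⟫_ℂ = ‖x‖ ^ 2 := inner_self_eq_norm_sq (𝕜 := ℂ) x
    have h2 : Complex.re ⟪T (T x), x⟫_ℂ = ‖T x‖ ^ 2 := by
      rw [symT (T x) x]
      exact inner_self_eq_norm_sq (𝕜 := ℂ) (T x)
    rw [h1, h2]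
  have posA : ∀ x : K, 0 ≤ Complex.re ⟪A x, x⟫_ℂ := by
    intro x
    rw [hreA, ← key1 x]
    exact Finset.sum_nonneg fun j _ => by positivity
  -- orthogonal complement characterization
  have hOrth : ∀ v : K, v ∈ M₁ᗮ ↔ ∀ j : J₁, ⟪e (Sum.inr j), v⟫_ℂ = 0 := by
    intro v
    constructor
    · intro hv j
      exact hv _ (hM₁ ▸ Submodule.subset_span ⟨j, rfl⟩)
    · intro hv
      rw [Submodule.mem_orthogonal]
      intro u hu
      rw [hM₁] at hu
      induction hu using Submodule.span_induction with
      | mem x hx => obtain ⟨j, rfl⟩ := hx; exact hv j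
      | zero => simp
      | add x y _ _ hx hy => rw [inner_add_left, hx, hy, add_zero]
      | smul c x _ hx => rw [inner_smul_left, hx, mul_zero]
  -- finite sum of norms vanishing iff orthogonal
  have hsum_zero : ∀ v : K, v ∈ M₁ᗮ ↔ (∑ j : J₁, ‖⟪e (Sum.inr j), v⟫_ℂ‖ ^ 2) = 0 := by
    intro v
    rw [hOrth]
    constructor
    · intro hv; exact Finset.sum_eq_zero fun j _ => by rw [hv j]; simp
    · intro hv j
      have h0 : ∀ i ∈ Finset.univ, (0:ℝ) ≤ ‖⟪e (Sum.inr i), v⟫_ℂ‖ ^ 2 :=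
        fun i _ => by positivity
      have h1 := (Finset.sum_eq_zero_iff_of_nonneg h0).mp hv j (Finset.mem_univ j)
      have h2 : ‖⟪e (Sum.inr j), v⟫_ℂ‖ = 0 := by
        nlinarith [norm_nonneg ⟪e (Sum.inr j), v⟫_ℂ]
      exact norm_eq_zero.mp h2
  -- R vanishes on M₁ᗮ
  have hRzero : ∀ v ∈ M₁ᗮ, R v = 0 := by
    intro v hv
    have h0 : Complex.re ⟪A v, v⟫_ℂ = 0 := by
      rw [hreA, ← key1 v, ← (hsum_zero v).mp hv]
    have hAv : A v = 0 := pos_app_zero' A symA posA v h0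
    have hTTv : T (T v) = v := by
      have h1 := hAapp v
      rw [hAv] at h1
      have := sub_eq_zero.mp h1.symm
      exact this.symm
    have hTinv2v : Tinv (Tinv v) = v := by
      calc Tinv (Tinv v) = Tinv (Tinv (T (T v))) := by rw [hTTv]
        _ = Tinv (T v) := by rw [hiT]
        _ = v := hiT v
    have hR2v : R (R v) = 0 := by rw [hRR, hTinv2v, sub_self]
    have h3 : Complex.re ⟪R v, R v⟫_ℂ = 0 := by
      rw [← symR (R v) v, hR2v, inner_zero_left, Complex.zero_re]
    have h4 : ‖R v‖ ^ 2 = 0 := by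
      rw [← inner_self_eq_norm_sq (𝕜 := ℂ) (R v)]; exact h3
    have h5 : ‖R v‖ = 0 := by nlinarith [norm_nonneg (R v)]
    exact norm_eq_zero.mp h5
  -- ker R ⊆ M₁ᗮ
  have hker : ∀ v : K, R v = 0 → v ∈ M₁ᗮ := by
    intro v hv
    have hRRv : R (R v) = 0 := by rw [hv, map_zero]
    have hTinv2v : Tinv (Tinv v) = v := by
      have h1 := hRR v
      rw [hRRv] at h1
      exact (sub_eq_zero.mp h1.symm)
    have hTTv : T (T v) = v := by
      calc T (T v) = T (T (Tinv (Tinv v))) := by rw [hTinv2v]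
        _ = T (Tinv v) := by rw [hTi]
        _ = v := hTi v
    have hTv : ‖T v‖ ^ 2 = ‖v‖ ^ 2 := by
      have h1 := symT (T v) v
      rw [hTTv] at h1
      have e1 : Complex.re ⟪T v, T v⟫_ℂ = ‖T v‖ ^ 2 := inner_self_eq_norm_sq (𝕜 := ℂ) (T v)
      have e2 : Complex.re ⟪v, v⟫_ℂ = ‖v‖ ^ 2 := inner_self_eq_norm_sq (𝕜 := ℂ) v
      rw [← e1, ← e2, h1]
    rw [hsum_zero, key1 v, hTv]
    exact sub_self _
  -- M₁ finite-dimensional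
  haveI hMfd : FiniteDimensional ℂ M₁ := by
    rw [hM₁]
    exact FiniteDimensional.span_of_finite ℂ (Set.finite_range _)
  have hM₁c : M₁ᗮᗮ = M₁ := Submodule.orthogonal_orthogonal M₁
  -- R maps K into M₁
  have hRM : ∀ x : K, R x ∈ M₁ := by
    intro x
    rw [← hM₁c, Submodule.mem_orthogonal]
    intro u hu
    rw [← symR u x, hRzero u hu, inner_zero_left]
  -- uniqueness within M₁
  have huniq : ∀ x₁ ∈ M₁, ∀ x₂ ∈ M₁, R x₁ = R x₂ → x₁ = x₂ := by
    intro x₁ h₁ x₂ h₂ hx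
    have h2 : R (x₁ - x₂) = 0 := by rw [map_sub, hx, sub_self]
    have h3 := hker _ h2
    have h4 : x₁ - x₂ ∈ M₁ := sub_mem h₁ h₂
    have h5 : ⟪x₁ - x₂, x₁ - x₂⟫_ℂ = 0 := (Submodule.mem_orthogonal _ _).mp h3 _ h4
    have h6 : x₁ - x₂ = 0 := inner_self_eq_zero.mp h5
    exact sub_eq_zero.mp h6
  -- existence: R is surjective M₁ → M₁
  have hExists : ∀ y ∈ M₁, ∃ x ∈ M₁, R x = y := by
    classical
    let φ : M₁ →ₗ[ℂ] M₁ :=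
      { toFun := fun x => ⟨R x, hRM x⟩
        map_add' := fun x y => by ext; simp
        map_smul' := fun c x => by ext; simp }
    have hinj : Function.Injective φ := by
      intro x y hxy
      have h1 : R (x : K) = R (y : K) := congrArg Subtype.val hxy
      exact Subtype.ext (huniq _ x.2 _ y.2 h1)
    have hsurj : Function.Surjective φ := LinearMap.injective_iff_surjective.mp hinj
    intro y hy
    obtain ⟨x, hx⟩ := hsurj ⟨y, hy⟩
    exact ⟨x, x.2, congrArg Subtype.val hx⟩
  constructor
  · intro j
    have hej : e (Sum.inr j) ∈ M₁ := hM₁ ▸ Submodule.subset_span ⟨j, rfl⟩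
    obtain ⟨x, hxM, hxR⟩ := hExists _ hej
    exact ⟨x, ⟨hxM, hxR⟩, fun y hy => huniq y hy.1 x hxM (by rw [hy.2, hxR])⟩
  · intro s hs f g hg
    obtain ⟨h, hhM, hRh⟩ := hExists g hg
    set u : K := T f + T (R g) with hu
    have hsummand : (fun j : J₀ ⊕ J₁ =>
          ‖Sum.elim
              (fun j₀ : J₀ => ⟪e (Sum.inl j₀), f⟫_ℂ + ⟪R (e (Sum.inl j₀)), g⟫_ℂ)
              (fun j₁ : J₁ => ⟪e (Sum.inr j₁), f⟫_ℂ + ⟪-(s j₁), g⟫_ℂ) j‖ ^ 2)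
        = Sum.elim (fun j₀ : J₀ => ‖⟪b j₀, u⟫_ℂ‖ ^ 2)
            (fun j₁ : J₁ => ‖⟪e (Sum.inr j₁), f - h⟫_ℂ‖ ^ 2) := by
      funext j
      cases j with
      | inl j₀ =>
        simp only [Sum.elim_inl]
        congr 1
        rw [he j₀, symT (b j₀) f, symR (T (b j₀)) g, symT (b j₀) (R g), ← inner_add_right]
      | inr j₁ =>
        simp only [Sum.elim_inr]
        congr 1
        have h1 : ⟪s j₁, g⟫_ℂ = ⟪e (Sum.inr j₁), h⟫_ℂ := by
          rw [← hRh, ← symR (s j₁) h, (hs j₁).2]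
        rw [inner_neg_left, h1, inner_sub_right]
        ring
    rw [hsummand]
    have hb0 : HasSum (fun j₀ : J₀ => ‖⟪b j₀, u⟫_ℂ‖ ^ 2) (‖u‖ ^ 2) :=
      hilbertBasis_parseval' b u
    have hb1 : HasSum (fun j₁ : J₁ => ‖⟪e (Sum.inr j₁), f - h⟫_ℂ‖ ^ 2)
        (‖f - h‖ ^ 2 - ‖T (f - h)‖ ^ 2) := by
      rw [← key1 (f - h)]
      exact hasSum_fintype _
    have htot := hasSum_sumElim' hb0 hb1
    have hfinal : ‖u‖ ^ 2 + (‖f - h‖ ^ 2 - ‖T (f - h)‖ ^ 2) = ‖f‖ ^ 2 + ‖g‖ ^ 2 := by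
      have hu2 : u = T (f - h) + Tinv h := by
        rw [hu, ← hRh, hRR h, map_sub, hTi (Tinv h), map_sub]
        abel
      have hcross : Complex.re ⟪T (f - h), Tinv h⟫_ℂ = Complex.re ⟪f - h, h⟫_ℂ := by
        rw [symT (f - h) (Tinv h), hTi]
      have hnu : ‖u‖ ^ 2
          = ‖T (f - h)‖ ^ 2 + 2 * Complex.re ⟪f - h, h⟫_ℂ + ‖Tinv h‖ ^ 2 := by
        have := norm_add_sq (𝕜 := ℂ) (T (f - h)) (Tinv h)
        rw [hu2]
        rw [← hcross]
        exact this
      have hng : ‖g‖ ^ 2 = ‖Tinv h‖ ^ 2 - ‖h‖ ^ 2 := by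
        have e0 : Complex.re ⟪R h, R h⟫_ℂ = ‖R h‖ ^ 2 := inner_self_eq_norm_sq (𝕜 := ℂ) (R h)
        have e1 : ⟪R (R h), h⟫_ℂ = ⟪R h, R h⟫_ℂ := symR (R h) h
        have e2 : Complex.re ⟪Tinv (Tinv h), h⟫_ℂ = ‖Tinv h‖ ^ 2 := by
          rw [symTinv (Tinv h) h]
          exact inner_self_eq_norm_sq (𝕜 := ℂ) (Tinv h)
        have e3 : Complex.re ⟪h, h⟫_ℂ = ‖h‖ ^ 2 := inner_self_eq_norm_sq (𝕜 := ℂ) h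
        have e4 : ⟪R (R h), h⟫_ℂ = ⟪Tinv (Tinv h), h⟫_ℂ - ⟪h, h⟫_ℂ := by
          rw [hRR, inner_sub_left]
        rw [← hRh, ← e0, ← e1, e4, Complex.sub_re, e2, e3]
      have hnf : ‖f‖ ^ 2 = ‖f - h‖ ^ 2 + 2 * Complex.re ⟪f - h, h⟫_ℂ + ‖h‖ ^ 2 := by
        have := norm_add_sq (𝕜 := ℂ) (f - h) h
        rw [sub_add_cancel] at this
        exact this
      linarith
    rw [← hfinal]
    exact htot
end

section
/- Let (φ_j)_{j∈J} be a frame in a complex Hilbert space K with frame operator S and analysis operator θ, and let A > 0. Then (φ_j) has an A-tight dual frame — i.e., a frame (ψ_j)_{j∈J} with ∑_{j∈J} |⟨f, ψ_j⟩|² = A‖f‖² for all f ∈ K and f = ∑_{j∈J} ⟨f, ψ_j⟩ φ_j for all f ∈ K — if and only if A·S − I is a nonnegative operator (⟨A·S f, f⟩ ≥ ‖f‖² for all f) and the Hilbert-space dimension of the closure of the range of I − (1/A)·S⁻¹ is at most the Hilbert-space dimension of the orthogonal complement of the range of θ in ℓ²(J). -/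
open scoped InnerProductSpace ENNReal NNReal

noncomputable section AuxStatement18
set_option linter.unusedSectionVars false




/-- Extend a linear isometry on a submodule to its topological closure. -/
theorem extend_closure_isometry {E F : Type*} [NormedAddCommGroup E] [NormedSpace ℂ E]
    [NormedAddCommGroup F] [NormedSpace ℂ F] [CompleteSpace F]
    (p : Submodule ℂ E) (i : p →ₗᵢ[ℂ] F) :
    Nonempty (p.topologicalClosure →ₗᵢ[ℂ] F) := by
  set q := p.topologicalClosure with hq
  have hpq : p ≤ q := p.le_topologicalClosure
  let e₀ : p →ₗᵢ[ℂ] q :=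
    { toLinearMap := Submodule.inclusion hpq
      norm_map' := fun x => rfl }
  let e : p →L[ℂ] q := e₀.toContinuousLinearMap
  have h_e : IsUniformInducing e := e₀.isometry.isUniformInducing
  have h_dense : DenseRange e := by
    intro x
    have hx : (x : E) ∈ closure (p : Set E) := by
      rw [← Submodule.topologicalClosure_coe]
      exact x.2
    rw [closure_subtype]
    have himg : (Subtype.val '' Set.range e) = (p : Set E) := by
      ext v
      constructor
      · rintro ⟨w, ⟨y, rfl⟩, rfl⟩
        exact y.2
      · intro hv
        exact ⟨e ⟨v, hv⟩, ⟨⟨v, hv⟩, rfl⟩, rfl⟩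
    rw [himg]
    exact hx
  let g : q →L[ℂ] F := (i.toContinuousLinearMap).extend e
  have hge : ∀ x : p, g (e x) = i x := fun x =>
    ContinuousLinearMap.extend_eq _ h_dense h_e _
  have hnorm : ∀ x : q, ‖g x‖ = ‖x‖ := by
    have hcl : IsClosed {x : q | ‖g x‖ = ‖x‖} :=
      isClosed_eq (g.continuous.norm) continuous_norm
    intro x
    refine h_dense.induction_on x hcl fun y => ?_
    show ‖g (e y)‖ = ‖e y‖
    rw [hge]
    rw [i.norm_map]
    rfl
  exact ⟨⟨g.toLinearMap, hnorm⟩⟩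





variable {J : Type*}

theorem rpow_toReal_two (r : ℝ) : r ^ ((2:ℝ≥0∞).toReal) = r ^ (2:ℕ) := by
  rw [show ((2:ℝ≥0∞).toReal) = ((2:ℕ):ℝ) by norm_num, Real.rpow_natCast]

theorem lp2_hasSum_normsq (x : lp (fun _ : J => ℂ) 2) :
    HasSum (fun j => ‖x j‖ ^ 2) (‖x‖ ^ 2) := by
  have h := lp.hasSum_norm (p := 2) (by norm_num) x
  simp only [rpow_toReal_two] at h
  exact h

theorem memℓp_two_of_sq_summable {c : J → ℂ} (h : Summable fun j => ‖c j‖ ^ 2) :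
    Memℓp c 2 := by
  apply memℓp_gen
  simp only [rpow_toReal_two]
  exact h

variable {K : Type*} [NormedAddCommGroup K] [InnerProductSpace ℂ K] [CompleteSpace K]

/-- existence of the analysis operator -/
theorem exists_theta (φ : J → K) (B₀ : ℝ) (hB₀ : 0 ≤ B₀)
    (hFrame : ∀ f : K, ∃ s : ℝ, HasSum (fun j => ‖⟪φ j, f⟫_ℂ‖ ^ 2) s ∧ s ≤ B₀ * ‖f‖ ^ 2) :
    ∃ θ : K →L[ℂ] lp (fun _ : J => ℂ) 2, ∀ f j, θ f j = ⟪φ j, f⟫_ℂ := by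
  have hmem : ∀ f : K, Memℓp (fun j => ⟪φ j, f⟫_ℂ) 2 := fun f => by
    obtain ⟨s, h1, _⟩ := hFrame f
    exact memℓp_two_of_sq_summable h1.summable
  let L : K →ₗ[ℂ] lp (fun _ : J => ℂ) 2 :=
    { toFun := fun f => ⟨fun j => ⟪φ j, f⟫_ℂ, hmem f⟩
      map_add' := fun f g => by
        apply lp.ext
        ext j
        simp only [lp.coeFn_add, Pi.add_apply]
        exact inner_add_right _ _ _
      map_smul' := fun c f => by
        apply lp.ext
        ext j
        simp only [lp.coeFn_smul, Pi.smul_apply]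
        exact inner_smul_right _ _ _ }
  refine ⟨L.mkContinuous (Real.sqrt B₀) (fun f => ?_), fun f j => rfl⟩
  obtain ⟨s, h1, h2⟩ := hFrame f
  have hn : ‖L f‖ ^ 2 = s := ((lp2_hasSum_normsq (L f)).unique h1)
  have h3 : ‖L f‖ ^ 2 ≤ (Real.sqrt B₀ * ‖f‖) ^ 2 := by
    rw [mul_pow, Real.sq_sqrt hB₀]
    rw [hn]; exact h2
  calc ‖L f‖ = Real.sqrt (‖L f‖ ^ 2) := by rw [Real.sqrt_sq (norm_nonneg _)]
    _ ≤ Real.sqrt ((Real.sqrt B₀ * ‖f‖) ^ 2) := Real.sqrt_le_sqrt h3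
    _ = Real.sqrt B₀ * ‖f‖ := Real.sqrt_sq (by positivity)




variable {J : Type*} {K : Type*} [NormedAddCommGroup K] [InnerProductSpace ℂ K] [CompleteSpace K]

variable {φ : J → K} {S Sinv : K →L[ℂ] K} {θ : K →L[ℂ] lp (fun _ : J => ℂ) 2}

section ThetaFacts
variable (hθ : ∀ f j, θ f j = ⟪φ j, f⟫_ℂ)
    (hS : ∀ f : K, HasSum (fun j => ⟪φ j, f⟫_ℂ • φ j) (S f))

include hθ hS

theorem inner_theta_theta (f g : K) : ⟪θ f, θ g⟫_ℂ = ⟪f, S g⟫_ℂ := by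
  have h1 : HasSum (fun j => ⟪f, ⟪φ j, g⟫_ℂ • φ j⟫_ℂ) ⟪f, S g⟫_ℂ :=
    (hS g).mapL (innerSL ℂ f)
  have h2 := lp.hasSum_inner (𝕜 := ℂ) (θ f) (θ g)
  refine (h2.congr_fun ?_).unique h1
  intro j
  rw [hθ f j, hθ g j, RCLike.inner_apply, inner_smul_right, ← inner_conj_symm f (φ j)]

theorem S_symm (f g : K) : ⟪S f, g⟫_ℂ = ⟪f, S g⟫_ℂ := by
  calc ⟪S f, g⟫_ℂ = starRingEnd ℂ ⟪g, S f⟫_ℂ := (inner_conj_symm _ _).symm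
    _ = starRingEnd ℂ ⟪θ g, θ f⟫_ℂ := by rw [inner_theta_theta hθ hS g f]
    _ = ⟪θ f, θ g⟫_ℂ := inner_conj_symm _ _
    _ = ⟪f, S g⟫_ℂ := inner_theta_theta hθ hS f g

theorem norm_theta_sq (f : K) : (‖θ f‖:ℝ) ^ 2 = (⟪f, S f⟫_ℂ).re := by
  rw [← inner_theta_theta hθ hS f f, inner_self_eq_norm_sq_to_K (𝕜 := ℂ)]
  simp [← Complex.ofReal_pow]

theorem adjoint_theta_single [DecidableEq J] (j : J) (c : ℂ) :
    (ContinuousLinearMap.adjoint θ) (lp.single 2 j c) = c • φ j := by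
  apply ext_inner_right ℂ
  intro f
  rw [ContinuousLinearMap.adjoint_inner_left, lp.inner_single_left, hθ f j,
    inner_smul_left]
  simp [RCLike.inner_apply, mul_comm]

theorem hasSum_synthesis (x : lp (fun _ : J => ℂ) 2) :
    HasSum (fun j => x j • φ j) ((ContinuousLinearMap.adjoint θ) x) := by
  classical
  have h1 : HasSum (fun j => lp.single 2 j (x j)) x := lp.hasSum_single (by norm_num) x
  have h2 := h1.mapL (ContinuousLinearMap.adjoint θ)
  refine h2.congr_fun fun j => ?_
  simp only [Function.comp]
  exact (adjoint_theta_single hθ hS j (x j)).symm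

theorem adjoint_theta_theta (g : K) : (ContinuousLinearMap.adjoint θ) (θ g) = S g := by
  apply ext_inner_right ℂ
  intro f
  rw [ContinuousLinearMap.adjoint_inner_left, inner_theta_theta hθ hS g f,
    S_symm hθ hS g f]

theorem adjoint_theta_orthogonal {Θ : Submodule ℂ (lp (fun _ : J => ℂ) 2)}
    (hΘ' : ∀ f : K, θ f ∈ Θ) {x : lp (fun _ : J => ℂ) 2} (hx : x ∈ Θᗮ) :
    (ContinuousLinearMap.adjoint θ) x = 0 := by
  apply ext_inner_right ℂ
  intro f
  rw [ContinuousLinearMap.adjoint_inner_left, inner_zero_left]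
  rw [← inner_conj_symm]
  rw [(Submodule.mem_orthogonal Θ x).mp hx (θ f) (hΘ' f)]
  simp

end ThetaFacts




variable {K : Type*} [NormedAddCommGroup K] [InnerProductSpace ℂ K] [CompleteSpace K]

theorem orth_range_symm {T : K →L[ℂ] K} (hT : ∀ f g, ⟪T f, g⟫_ℂ = ⟪f, T g⟫_ℂ) :
    (LinearMap.range (T : K →ₗ[ℂ] K))ᗮ = LinearMap.ker (T : K →ₗ[ℂ] K) := by
  ext x
  rw [Submodule.mem_orthogonal, LinearMap.mem_ker, ContinuousLinearMap.coe_coe]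
  constructor
  · intro h
    apply ext_inner_left ℂ
    intro v
    rw [← hT v x, inner_zero_right]
    exact h (T v) ⟨v, rfl⟩
  · rintro h u ⟨v, rfl⟩
    show ⟪T v, x⟫_ℂ = 0
    rw [hT v x, h, inner_zero_right]

theorem closure_range_symm {T : K →L[ℂ] K} (hT : ∀ f g, ⟪T f, g⟫_ℂ = ⟪f, T g⟫_ℂ) :
    (LinearMap.range (T : K →ₗ[ℂ] K)).topologicalClosure = (LinearMap.ker (T : K →ₗ[ℂ] K))ᗮ := by
  rw [← Submodule.orthogonal_orthogonal_eq_closure, orth_range_symm hT]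

theorem ker_sqrt_eq {R D : K →L[ℂ] K} (hR : ∀ f g, ⟪R f, g⟫_ℂ = ⟪f, R g⟫_ℂ)
    (hRD : ∀ f, R (R f) = D f) : LinearMap.ker (R : K →ₗ[ℂ] K) = LinearMap.ker (D : K →ₗ[ℂ] K) := by
  ext x
  simp only [LinearMap.mem_ker, ContinuousLinearMap.coe_coe]
  constructor
  · intro h
    rw [← hRD, h, map_zero]
  · intro h
    have h2 : ⟪R x, R x⟫_ℂ = 0 := by rw [hR x (R x), hRD, h, inner_zero_right]
    exact inner_self_eq_zero.mp h2

theorem normsq_apply_symm {R D : K →L[ℂ] K} (hR : ∀ f g, ⟪R f, g⟫_ℂ = ⟪f, R g⟫_ℂ)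
    (hRD : ∀ f, R (R f) = D f) (f : K) : ‖R f‖ ^ 2 = (⟪f, D f⟫_ℂ).re := by
  rw [← hRD, ← hR f (R f), ← inner_self_eq_norm_sq (𝕜 := ℂ)]
  rfl





variable {K : Type*} [NormedAddCommGroup K] [InnerProductSpace ℂ K] [CompleteSpace K]

theorem re_inner_symm (x y : K) : (⟪x, y⟫_ℂ).re = (⟪y, x⟫_ℂ).re := by
  rw [← inner_conj_symm x y]
  exact Complex.conj_re _

theorem ofReal_mul_re' (r : ℝ) (z : ℂ) : ((r:ℂ) * z).re = r * z.re := by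
  simp [Complex.mul_re]

theorem exists_sqrt_op {D : K →L[ℂ] K} (hD : D.IsPositive) :
    ∃ R : K →L[ℂ] K, (∀ f g, ⟪R f, g⟫_ℂ = ⟪f, R g⟫_ℂ) ∧ ∀ f, R (R f) = D f := by
  have hD' : (0:K →L[ℂ] K) ≤ D := (ContinuousLinearMap.nonneg_iff_isPositive D).mpr hD
  refine ⟨CFC.sqrt D, ?_, ?_⟩
  · have h0 : (0:K →L[ℂ] K) ≤ CFC.sqrt D := CFC.sqrt_nonneg (a := D)
    have hsa : IsSelfAdjoint (CFC.sqrt D) :=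
      ((ContinuousLinearMap.nonneg_iff_isPositive _).mp h0).isSelfAdjoint
    exact fun f g =>
      (ContinuousLinearMap.isSelfAdjoint_iff_isSymmetric.mp hsa) f g
  · intro f
    have h2 : CFC.sqrt D ^ 2 = D := CFC.sq_sqrt D hD'
    calc CFC.sqrt D (CFC.sqrt D f) = (CFC.sqrt D * CFC.sqrt D) f := rfl
      _ = (CFC.sqrt D ^ 2) f := by rw [pow_two]
      _ = D f := by rw [h2]

theorem sinv_re_le {S Sinv : K →L[ℂ] K}
    (hSSinv : ∀ f, S (Sinv f) = f)
    (hSpos : ∀ f, 0 ≤ (⟪f, S f⟫_ℂ).re)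
    (A : ℝ) (hA : 0 < A)
    (hpos : ∀ f : K, ‖f‖ ^ 2 ≤ (⟪f, (A : ℂ) • S f⟫_ℂ).re) (f : K) :
    0 ≤ (⟪f, Sinv f⟫_ℂ).re ∧ (⟪f, Sinv f⟫_ℂ).re ≤ A * ‖f‖ ^ 2 := by
  set g := Sinv f with hg
  set t := (⟪f, Sinv f⟫_ℂ).re with ht
  have hfg : f = S g := (hSSinv f).symm
  have ht0 : 0 ≤ t := by
    have h1 : ⟪f, Sinv f⟫_ℂ = ⟪S g, g⟫_ℂ := by rw [← hfg]
    have h2 : (⟪S g, g⟫_ℂ).re = (⟪g, S g⟫_ℂ).re := re_inner_symm _ _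
    rw [ht, h1, h2]
    exact hSpos g
  have hre : (⟪g, f⟫_ℂ).re = t := by
    rw [ht, hg]
    exact re_inner_symm _ _
  have hg2 : ‖g‖ ^ 2 ≤ A * t := by
    have := hpos g
    rw [inner_smul_right] at this
    have h3 : ((A:ℂ) * ⟪g, S g⟫_ℂ).re = A * (⟪g, S g⟫_ℂ).re := by
      exact ofReal_mul_re' _ _
    rw [h3, ← hfg, hre] at this
    exact this
  have htf : t ≤ ‖f‖ * ‖g‖ := by
    calc t ≤ ‖⟪f, g⟫_ℂ‖ := by
          rw [ht]; exact Complex.re_le_norm _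
      _ = ‖⟪f, g⟫_ℂ‖ := rfl
      _ ≤ ‖f‖ * ‖g‖ := norm_inner_le_norm _ _
  refine ⟨ht0, ?_⟩
  rcases eq_or_lt_of_le ht0 with h | h
  · rw [← h]; positivity
  · have h4 : t * t ≤ (A * ‖f‖ ^ 2) * t := by nlinarith [norm_nonneg f, norm_nonneg g]
    exact le_of_mul_le_mul_right h4 h

theorem D_isPositive {S Sinv : K →L[ℂ] K}
    (hSSinv : ∀ f, S (Sinv f) = f)
    (hSinvsym : ∀ f g, ⟪Sinv f, g⟫_ℂ = ⟪f, Sinv g⟫_ℂ)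
    (hSpos : ∀ f, 0 ≤ (⟪f, S f⟫_ℂ).re)
    (A : ℝ) (hA : 0 < A)
    (hpos : ∀ f : K, ‖f‖ ^ 2 ≤ (⟪f, (A : ℂ) • S f⟫_ℂ).re) :
    ((A:ℂ) • (1:K →L[ℂ] K) - Sinv).IsPositive := by
  constructor
  · intro x y
    show ⟪(A:ℂ) • x - Sinv x, y⟫_ℂ = ⟪x, (A:ℂ) • y - Sinv y⟫_ℂ
    rw [inner_sub_left, inner_sub_right, inner_smul_left, inner_smul_right,
      Complex.conj_ofReal, hSinvsym]
  · intro x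
    have h := (sinv_re_le hSSinv hSpos A hA hpos x).2
    show 0 ≤ (⟪((A:ℂ) • (1:K →L[ℂ] K) - Sinv) x, x⟫_ℂ).re
    have : (⟪((A:ℂ) • (1:K →L[ℂ] K) - Sinv) x, x⟫_ℂ).re
        = (⟪x, ((A:ℂ) • (1:K →L[ℂ] K) - Sinv) x⟫_ℂ).re := re_inner_symm _ _
    rw [this]
    show 0 ≤ (⟪x, (A:ℂ) • x - Sinv x⟫_ℂ).re
    rw [inner_sub_right, inner_smul_right]
    have h5 : ((A:ℂ) * ⟪x, x⟫_ℂ).re = A * ‖x‖ ^ 2 := by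
      rw [inner_self_eq_norm_sq_to_K (𝕜 := ℂ)]
      simp [← Complex.ofReal_pow]
    rw [Complex.sub_re, h5]
    linarith





variable {K : Type*} [NormedAddCommGroup K] [InnerProductSpace ℂ K] [CompleteSpace K]

theorem isometry_on_range {R : K →L[ℂ] K} {F : Type*} [NormedAddCommGroup F]
    [NormedSpace ℂ F] (V : K →ₗ[ℂ] F) (hVR : ∀ f, ‖V f‖ = ‖R f‖) :
    Nonempty ((LinearMap.range (R : K →ₗ[ℂ] K)) →ₗᵢ[ℂ] F) := by
  have hwd : ∀ a b : K, R a = R b → V a = V b := by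
    intro a b h
    have h0 : ‖V a - V b‖ = 0 := by
      rw [← map_sub, hVR, map_sub, h, sub_self, norm_zero]
    rwa [norm_sub_eq_zero_iff] at h0
  have hmem : ∀ x : LinearMap.range (R : K →ₗ[ℂ] K), ∃ y : K, R y = (x : K) := fun x =>
    LinearMap.mem_range.mp x.2
  set pick : LinearMap.range (R : K →ₗ[ℂ] K) → K := fun x => Classical.choose (hmem x) with hpick
  have hspec : ∀ x : LinearMap.range (R : K →ₗ[ℂ] K), R (pick x) = (x : K) := fun x =>
    Classical.choose_spec (hmem x)
  refine ⟨⟨⟨⟨fun x => V (pick x), ?_⟩, ?_⟩, ?_⟩⟩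
  · intro x y
    show V (pick (x + y)) = V (pick x) + V (pick y)
    rw [← map_add V]
    apply hwd
    rw [hspec, map_add, hspec, hspec]
    rfl
  · intro c x
    show V (pick (c • x)) = c • V (pick x)
    rw [← map_smul V]
    apply hwd
    rw [hspec, map_smul, hspec]
    rfl
  · intro x
    show ‖V (pick x)‖ = ‖x‖
    rw [hVR, hspec]
    rfl



end AuxStatement18

open scoped InnerProductSpace

/-- Let `(φ j)` be a frame in `K` with frame operator `S` (with bounded inverse
`Sinv`) and analysis-operator range `Θ ⊆ ℓ²(J)`, and let `A > 0`. Then `(φ j)` has an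
`A`-tight dual frame (a family `ψ` with `∑ j, |⟨f, ψ_j⟩|² = A‖f‖²` and
`f = ∑ j, ⟨f, ψ_j⟩ φ_j` for all `f`) iff `A·S − I ≥ 0` (i.e. `⟨A·S f, f⟩ ≥ ‖f‖²` for all
`f`) and the Hilbert-space dimension of the closure of the range of `I − (1/A)·S⁻¹` is at
most that of `Θᗮ` (expressed by a linear isometric embedding).
(The paper's inner product `(f, g)`, linear in the first argument, is `⟪g, f⟫_ℂ`.) -/
theorem statement18
    {K : Type*} [NormedAddCommGroup K] [InnerProductSpace ℂ K] [CompleteSpace K]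
    {J : Type*} [Countable J]
    (φ : J → K) (A₀ B₀ : ℝ) (hA₀ : 0 < A₀) (hAB₀ : A₀ ≤ B₀)
    (hFrame : ∀ f : K, ∃ s : ℝ, HasSum (fun j => ‖⟪φ j, f⟫_ℂ‖ ^ 2) s ∧
      A₀ * ‖f‖ ^ 2 ≤ s ∧ s ≤ B₀ * ‖f‖ ^ 2)
    (S Sinv : K →L[ℂ] K)
    (hS : ∀ f : K, HasSum (fun j => ⟪φ j, f⟫_ℂ • φ j) (S f))
    (hSinv₁ : S ∘L Sinv = 1) (hSinv₂ : Sinv ∘L S = 1)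
    (Θ : Submodule ℂ (lp (fun _ : J => ℂ) 2))
    (hΘ : ∀ x : lp (fun _ : J => ℂ) 2, x ∈ Θ ↔ ∃ f : K, ∀ j, x j = ⟪φ j, f⟫_ℂ)
    (A : ℝ) (hA : 0 < A) :
    (∃ ψ : J → K,
      (∀ f : K, HasSum (fun j => ‖⟪ψ j, f⟫_ℂ‖ ^ 2) (A * ‖f‖ ^ 2)) ∧
      ∀ f : K, HasSum (fun j => ⟪ψ j, f⟫_ℂ • φ j) f) ↔
    ((∀ f : K, ‖f‖ ^ 2 ≤ (⟪f, (A : ℂ) • S f⟫_ℂ).re) ∧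
      Nonempty ((LinearMap.range
          ((1 - ((A : ℂ))⁻¹ • Sinv : K →L[ℂ] K) : K →ₗ[ℂ] K)).topologicalClosure →ₗᵢ[ℂ] Θᗮ)) := by
  classical
  have hAc : (A : ℂ) ≠ 0 := by
    simp [Complex.ofReal_ne_zero]
    linarith
  obtain ⟨θ, hθ⟩ := exists_theta φ B₀ (le_trans hA₀.le hAB₀)
    (fun f => by obtain ⟨s, h1, _, h3⟩ := hFrame f; exact ⟨s, h1, h3⟩)
  have hSSinv : ∀ f, S (Sinv f) = f := fun f => by
    have h := congrFun (congrArg DFunLike.coe hSinv₁) f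
    simpa using h
  have hSinvS : ∀ f, Sinv (S f) = f := fun f => by
    have h := congrFun (congrArg DFunLike.coe hSinv₂) f
    simpa using h
  have hSsym := S_symm hθ hS
  have hSinvsym : ∀ f g, ⟪Sinv f, g⟫_ℂ = ⟪f, Sinv g⟫_ℂ := fun f g => by
    calc ⟪Sinv f, g⟫_ℂ = ⟪Sinv f, S (Sinv g)⟫_ℂ := by rw [hSSinv]
      _ = ⟪S (Sinv f), Sinv g⟫_ℂ := (hSsym _ _).symm
      _ = ⟪f, Sinv g⟫_ℂ := by rw [hSSinv]
  have hSpos : ∀ f, 0 ≤ (⟪f, S f⟫_ℂ).re := fun f => by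
    rw [← norm_theta_sq hθ hS f]; positivity
  have hΘmem : ∀ f, θ f ∈ Θ := fun f => (hΘ (θ f)).mpr ⟨f, fun j => hθ f j⟩
  have hΘeq : ∀ x ∈ Θ, ∃ f, θ f = x := by
    intro x hx
    obtain ⟨f, hf⟩ := (hΘ x).mp hx
    exact ⟨f, lp.ext (funext fun j => by rw [hθ f j, hf j])⟩
  -- shared submodule identification
  have hre : ∀ R : K →L[ℂ] K, (∀ f g, ⟪R f, g⟫_ℂ = ⟪f, R g⟫_ℂ) →
      (∀ f, R (R f) = ((A:ℂ) • (1:K →L[ℂ] K) - Sinv) f) →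
      (LinearMap.range ((1 - ((A : ℂ))⁻¹ • Sinv : K →L[ℂ] K) : K →ₗ[ℂ] K)).topologicalClosure
        = (LinearMap.range (R : K →ₗ[ℂ] K)).topologicalClosure := by
    intro R hRsym hRD
    set D : K →L[ℂ] K := (A:ℂ) • (1:K →L[ℂ] K) - Sinv with hDdef
    have hDsym : ∀ f g, ⟪D f, g⟫_ℂ = ⟪f, D g⟫_ℂ := fun f g => by
      show ⟪(A:ℂ) • f - Sinv f, g⟫_ℂ = ⟪f, (A:ℂ) • g - Sinv g⟫_ℂ
      rw [inner_sub_left, inner_sub_right, inner_smul_left, inner_smul_right,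
        Complex.conj_ofReal, hSinvsym]
    have hr1 : LinearMap.range ((1 - ((A : ℂ))⁻¹ • Sinv : K →L[ℂ] K) : K →ₗ[ℂ] K)
        = LinearMap.range (D : K →ₗ[ℂ] K) := by
      have hop : ∀ f, (1 - ((A : ℂ))⁻¹ • Sinv : K →L[ℂ] K) f = (A:ℂ)⁻¹ • D f := by
        intro f
        show f - (A:ℂ)⁻¹ • Sinv f = (A:ℂ)⁻¹ • ((A:ℂ) • f - Sinv f)
        rw [smul_sub, smul_smul, inv_mul_cancel₀ hAc, one_smul]
      ext x
      simp only [LinearMap.mem_range]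
      constructor
      · rintro ⟨y, rfl⟩
        exact ⟨(A:ℂ)⁻¹ • y, by
          show D ((A:ℂ)⁻¹ • y) = _
          rw [map_smul]
          exact (hop y).symm⟩
      · rintro ⟨y, rfl⟩
        refine ⟨(A:ℂ) • y, ?_⟩
        show (1 - ((A : ℂ))⁻¹ • Sinv : K →L[ℂ] K) ((A:ℂ) • y) = D y
        rw [hop, map_smul, smul_smul, inv_mul_cancel₀ hAc, one_smul]
    rw [hr1, closure_range_symm hDsym, closure_range_symm hRsym,
      ker_sqrt_eq hRsym hRD]
  constructor
  · rintro ⟨ψ, htight, hdual⟩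
    obtain ⟨θψ, hθψ⟩ := exists_theta ψ A hA.le (fun f => ⟨A * ‖f‖ ^ 2, htight f, le_refl _⟩)
    have hθψnorm : ∀ f, ‖θψ f‖ ^ 2 = A * ‖f‖ ^ 2 := fun f => by
      have h := lp2_hasSum_normsq (θψ f)
      exact (h.congr_fun fun j => by rw [hθψ f j]).unique (htight f)
    have hid : ∀ h f : K, ⟪θ h, θψ f⟫_ℂ = ⟪h, f⟫_ℂ := by
      intro h f
      have h1 := lp.hasSum_inner (𝕜 := ℂ) (θ h) (θψ f)
      have h2 : HasSum (fun j => ⟪h, ⟪ψ j, f⟫_ℂ • φ j⟫_ℂ) ⟪h, f⟫_ℂ :=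
        (hdual f).mapL (innerSL ℂ h)
      refine (h1.congr_fun fun j => ?_).unique h2
      rw [hθ h j, hθψ f j, RCLike.inner_apply, inner_smul_right,
        ← inner_conj_symm h (φ j)]
    have hpos : ∀ f : K, ‖f‖ ^ 2 ≤ (⟪f, (A : ℂ) • S f⟫_ℂ).re := by
      intro f
      have h4 : ‖f‖ ^ 2 = ‖⟪θ f, θψ f⟫_ℂ‖ := by
        rw [hid f f, inner_self_eq_norm_sq_to_K (𝕜 := ℂ)]
        simp [← Complex.ofReal_pow]
      have h5 : ‖f‖ ^ 2 ≤ ‖θ f‖ * ‖θψ f‖ := h4 ▸ norm_inner_le_norm _ _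
      have h6 := norm_theta_sq hθ hS f
      rw [inner_smul_right, ofReal_mul_re', ← h6]
      by_cases hf : f = 0
      · simp [hf]
      have hf' : 0 < ‖f‖ := norm_pos_iff.mpr hf
      have h7 : (‖f‖^2) * (‖f‖^2) ≤ (‖θ f‖ * ‖θψ f‖) * (‖θ f‖ * ‖θψ f‖) :=
        mul_le_mul h5 h5 (by positivity) (by positivity)
      have h8 : (‖θ f‖ * ‖θψ f‖) * (‖θ f‖ * ‖θψ f‖) = (A * ‖θ f‖^2) * ‖f‖^2 := by
        calc (‖θ f‖ * ‖θψ f‖) * (‖θ f‖ * ‖θψ f‖) = ‖θ f‖^2 * ‖θψ f‖^2 := by ring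
          _ = ‖θ f‖^2 * (A * ‖f‖^2) := by rw [hθψnorm f]
          _ = (A * ‖θ f‖^2) * ‖f‖^2 := by ring
      refine le_of_mul_le_mul_right ?_ (by positivity : (0:ℝ) < ‖f‖^2)
      calc ‖f‖^2 * ‖f‖^2 ≤ _ := h7
        _ = (A * ‖θ f‖^2) * ‖f‖^2 := h8
    refine ⟨hpos, ?_⟩
    set D : K →L[ℂ] K := (A:ℂ) • (1:K →L[ℂ] K) - Sinv with hDdef
    have hD : D.IsPositive := D_isPositive hSSinv hSinvsym hSpos A hA hpos
    obtain ⟨R, hRsym, hRD⟩ := exists_sqrt_op hD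
    set V : K →L[ℂ] lp (fun _ : J => ℂ) 2 := θψ - θ ∘L Sinv with hVdef
    have hVapp : ∀ f, V f = θψ f - θ (Sinv f) := fun f => rfl
    have hVΘ : ∀ f, V f ∈ Θᗮ := by
      intro f
      rw [Submodule.mem_orthogonal]
      intro u hu
      obtain ⟨h, rfl⟩ := hΘeq u hu
      rw [hVapp, inner_sub_right, hid h f, inner_theta_theta hθ hS h (Sinv f),
        hSSinv, sub_self]
    have hVnormsq : ∀ f, ‖V f‖ ^ 2 = (⟪f, D f⟫_ℂ).re := by
      intro f
      rw [hVapp, @norm_sub_sq ℂ]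
      simp only [RCLike.re_to_complex]
      have e2 : (⟪θψ f, θ (Sinv f)⟫_ℂ).re = (⟪f, Sinv f⟫_ℂ).re := by
        rw [re_inner_symm (θψ f) (θ (Sinv f)), hid (Sinv f) f]
        exact re_inner_symm _ _
      have e3 : ‖θ (Sinv f)‖ ^ 2 = (⟪f, Sinv f⟫_ℂ).re := by
        rw [norm_theta_sq hθ hS (Sinv f), hSSinv]
        exact re_inner_symm _ _
      have e4 : (⟪f, D f⟫_ℂ).re = A * ‖f‖ ^ 2 - (⟪f, Sinv f⟫_ℂ).re := by
        show (⟪f, (A:ℂ) • f - Sinv f⟫_ℂ).re = _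
        rw [inner_sub_right, inner_smul_right, Complex.sub_re, ofReal_mul_re',
          inner_self_eq_norm_sq_to_K (𝕜 := ℂ)]
        simp [← Complex.ofReal_pow]
      rw [hθψnorm f, e2, e3, e4]
      ring
    have hVR : ∀ f, ‖V f‖ = ‖R f‖ := fun f => by
      have h1 : ‖V f‖ ^ 2 = ‖R f‖ ^ 2 := by
        rw [hVnormsq, normsq_apply_symm hRsym hRD]
      calc ‖V f‖ = Real.sqrt (‖V f‖ ^ 2) := (Real.sqrt_sq (norm_nonneg _)).symm
        _ = Real.sqrt (‖R f‖ ^ 2) := by rw [h1]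
        _ = ‖R f‖ := Real.sqrt_sq (norm_nonneg _)
    set V' : K →ₗ[ℂ] ↥Θᗮ := (V : K →ₗ[ℂ] lp (fun _ : J => ℂ) 2).codRestrict Θᗮ hVΘ
      with hV'def
    obtain ⟨i₀⟩ := isometry_on_range (R := R) V' (fun f => hVR f)
    obtain ⟨i₁⟩ := extend_closure_isometry (LinearMap.range (R : K →ₗ[ℂ] K)) i₀
    exact ⟨(hre R hRsym hRD) ▸ i₁⟩
  · rintro ⟨hpos, ⟨i⟩⟩
    set D : K →L[ℂ] K := (A:ℂ) • (1:K →L[ℂ] K) - Sinv with hDdef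
    have hD : D.IsPositive := D_isPositive hSSinv hSinvsym hSpos A hA hpos
    obtain ⟨R, hRsym, hRD⟩ := exists_sqrt_op hD
    have hre' := hre R hRsym hRD
    rw [hre'] at i
    have hmemM : ∀ f, R f ∈ (LinearMap.range (R : K →ₗ[ℂ] K)).topologicalClosure := fun f =>
      Submodule.le_topologicalClosure _ (LinearMap.mem_range_self _ f)
    set V : K →L[ℂ] lp (fun _ : J => ℂ) 2 :=
      Θᗮ.subtypeL ∘L i.toContinuousLinearMap ∘L
        (R.codRestrict (LinearMap.range (R : K →ₗ[ℂ] K)).topologicalClosure hmemM) with hVdef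
    have hVmem : ∀ f, V f ∈ Θᗮ := fun f => SetLike.coe_mem _
    have hVnorm : ∀ f, ‖V f‖ = ‖R f‖ := fun f => by
      show ‖(i (⟨R f, hmemM f⟩) : lp (fun _ : J => ℂ) 2)‖ = ‖R f‖
      rw [← Submodule.coe_norm, i.norm_map]
      rfl
    set θs := ContinuousLinearMap.adjoint θ with hθsdef
    set Vs := ContinuousLinearMap.adjoint V with hVsdef
    refine ⟨fun j => Sinv (φ j) + Vs (lp.single 2 j 1), ?_, ?_⟩
    · intro f
      set u := θ (Sinv f) with hu
      set w := V f with hw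
      have hkey : ∀ j, ⟪Sinv (φ j) + Vs (lp.single 2 j 1), f⟫_ℂ = (u + w) j := by
        intro j
        rw [inner_add_left, lp.coeFn_add, Pi.add_apply]
        congr 1
        · rw [hSinvsym, ← hθ (Sinv f) j]
        · rw [hVsdef, ContinuousLinearMap.adjoint_inner_left, lp.inner_single_left]
          simp
          rfl
      have horth : ⟪u, w⟫_ℂ = 0 :=
        Submodule.inner_right_of_mem_orthogonal (hΘmem (Sinv f)) (hVmem f)
      have hnu : ‖u‖ ^ 2 = (⟪f, Sinv f⟫_ℂ).re := by
        rw [hu, norm_theta_sq hθ hS (Sinv f)]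
        rw [hSSinv]
        exact re_inner_symm _ _
      have hnw : ‖w‖ ^ 2 = A * ‖f‖ ^ 2 - (⟪f, Sinv f⟫_ℂ).re := by
        have h1 : ‖w‖ ^ 2 = (⟪f, D f⟫_ℂ).re := by
          show ‖V f‖ ^ 2 = _
          rw [hVnorm f]
          exact normsq_apply_symm hRsym hRD f
        rw [h1]
        show (⟪f, (A:ℂ) • f - Sinv f⟫_ℂ).re = _
        rw [inner_sub_right, inner_smul_right, Complex.sub_re, ofReal_mul_re',
          inner_self_eq_norm_sq_to_K (𝕜 := ℂ)]
        simp [← Complex.ofReal_pow]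
      have hxsq : ‖u + w‖ ^ 2 = A * ‖f‖ ^ 2 := by
        rw [@norm_add_sq ℂ, horth]
        simp only [map_zero, mul_zero, add_zero]
        rw [hnu, hnw]
        ring
      have hsum := lp2_hasSum_normsq (u + w)
      rw [hxsq] at hsum
      exact hsum.congr_fun fun j => by rw [hkey j]
    · intro f
      set u := θ (Sinv f) with hu
      set w := V f with hw
      have hkey : ∀ j, ⟪Sinv (φ j) + Vs (lp.single 2 j 1), f⟫_ℂ = (u + w) j := by
        intro j
        rw [inner_add_left, lp.coeFn_add, Pi.add_apply]
        congr 1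
        · rw [hSinvsym, ← hθ (Sinv f) j]
        · rw [hVsdef, ContinuousLinearMap.adjoint_inner_left, lp.inner_single_left]
          simp
          rfl
      have hsyn := hasSum_synthesis hθ hS (u + w)
      have hval : θs (u + w) = f := by
        rw [map_add]
        have h1 : θs u = f := by
          rw [hu, hθsdef, adjoint_theta_theta hθ hS (Sinv f), hSSinv]
        have h2 : θs w = 0 := adjoint_theta_orthogonal hθ hS hΘmem (hVmem f)
        rw [h1, h2, add_zero]
      rw [hθsdef] at hval
      rw [hval] at hsyn
      exact hsyn.congr_fun fun j => by rw [hkey j]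
end

section
/- Let S be a bounded positive operator with bounded inverse on a complex Hilbert space K, and let Q be a bounded self-adjoint operator on K such that the operator S⁻¹Q is nonnegative, i.e., ⟨S⁻¹Q f, f⟩ ≥ 0 for all f ∈ K. Then Q commutes with S (Q S = S Q) and Q itself is nonnegative: ⟨Q f, f⟩ ≥ 0 for all f ∈ K. -/
open scoped InnerProductSpace ComplexOrder

/-- Let `S` be a bounded positive operator with bounded inverse `Sinv` on a
complex Hilbert space `K`, and `Q` a bounded self-adjoint operator such that `S⁻¹Q` is
nonnegative, i.e. `⟨S⁻¹ Q f, f⟩ ≥ 0` (as a complex number) for all `f`. Then `Q` commutes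
with `S` and `Q` itself is nonnegative: `⟪Q f, f⟫ ≥ 0` for all `f`.
(The paper's inner product `(f, g)`, linear in the first argument, is `⟪g, f⟫_ℂ`, so the
paper's `⟨S⁻¹Q f, f⟩` is `⟪f, S⁻¹ (Q f)⟫_ℂ`.) -/
theorem statement19
    {K : Type*} [NormedAddCommGroup K] [InnerProductSpace ℂ K] [CompleteSpace K]
    (S Sinv : K →L[ℂ] K) (hS : S.IsPositive)
    (hSinv₁ : S ∘L Sinv = 1) (hSinv₂ : Sinv ∘L S = 1)
    (Q : K →L[ℂ] K) (hQ : IsSelfAdjoint Q)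
    (hpos : ∀ f : K, 0 ≤ ⟪f, Sinv (Q f)⟫_ℂ) :
    Q ∘L S = S ∘L Q ∧ ∀ f : K, 0 ≤ ⟪f, Q f⟫_ℂ := by
  -- view compositions as ring multiplication
  have hmulS : S * Sinv = 1 := hSinv₁
  have hmulS' : Sinv * S = 1 := hSinv₂
  set A : K →L[ℂ] K := Sinv ∘L Q with hAdef
  have hAmul : A = Sinv * Q := rfl
  -- A is positive
  have hApos : A.IsPositive := by
    rw [ContinuousLinearMap.isPositive_iff_complex]
    intro x
    have h := hpos x
    have hAx : A x = Sinv (Q x) := rfl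
    have h1 : ⟪A x, x⟫_ℂ = starRingEnd ℂ ⟪x, A x⟫_ℂ := (inner_conj_symm (A x) x).symm
    rw [Complex.le_def] at h
    simp only [Complex.zero_re, Complex.zero_im] at h
    have hz : (starRingEnd ℂ) ⟪x, A x⟫_ℂ = ⟪x, A x⟫_ℂ := by
      rw [Complex.conj_eq_iff_im]; exact h.2.symm
    have h1' : ⟪A x, x⟫_ℂ = ⟪x, A x⟫_ℂ := h1.trans hz
    rw [Complex.conj_eq_iff_re] at hz
    constructor
    · rw [h1']; simpa using hz
    · rw [h1']; simpa [hAx] using h.1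
  have hA0 : (0 : K →L[ℂ] K) ≤ A := (ContinuousLinearMap.nonneg_iff_isPositive A).mpr hApos
  -- Sinv is self-adjoint
  have hSsa : IsSelfAdjoint S := hS.isSelfAdjoint
  have hSinvsa : IsSelfAdjoint Sinv := by
    have h1 : star Sinv * S = 1 := by
      calc star Sinv * S = star Sinv * star S := by rw [hSsa.star_eq]
        _ = star (S * Sinv) := (star_mul S Sinv).symm
        _ = 1 := by rw [hmulS, star_one]
    calc star Sinv = star Sinv * (S * Sinv) := by rw [hmulS, mul_one]
      _ = (star Sinv * S) * Sinv := (mul_assoc _ _ _).symm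
      _ = Sinv := by rw [h1, one_mul]
  -- A self-adjoint gives Sinv * Q = Q * Sinv
  have hAsa : IsSelfAdjoint A := hApos.isSelfAdjoint
  have hcomm : Sinv * Q = Q * Sinv := by
    conv_lhs => rw [← hAmul, ← hAsa.star_eq, hAmul, star_mul, hQ.star_eq, hSinvsa.star_eq]
  -- commutation of Q and S
  have hQS : Q * S = S * Q := by
    calc Q * S = (S * (Sinv * Q)) * S := by rw [← mul_assoc, hmulS, one_mul]
      _ = (S * (Q * Sinv)) * S := by rw [hcomm]
      _ = S * Q * (Sinv * S) := by noncomm_ring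
      _ = S * Q := by rw [hmulS', mul_one]
  refine ⟨hQS, ?_⟩
  -- square root of S
  have hS0 : (0 : K →L[ℂ] K) ≤ S := (ContinuousLinearMap.nonneg_iff_isPositive S).mpr hS
  set s : K →L[ℂ] K := CFC.sqrt S with hsdef
  have hs0 : (0 : K →L[ℂ] K) ≤ s := CFC.sqrt_nonneg S
  have hss : s * s = S := CFC.sqrt_mul_sqrt_self S hS0
  have hssa : IsSelfAdjoint s := IsSelfAdjoint.of_nonneg hs0
  -- s is invertible: left and right inverses
  have hleft : (Sinv * s) * s = 1 := by rw [mul_assoc, hss, hmulS']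
  have hright : s * (s * Sinv) = 1 := by rw [← mul_assoc, hss, hmulS]
  have hlr : Sinv * s = s * Sinv := by
    calc Sinv * s = (Sinv * s) * (s * (s * Sinv)) := by rw [hright, mul_one]
      _ = ((Sinv * s) * s) * (s * Sinv) := by rw [← mul_assoc]
      _ = s * Sinv := by rw [hleft, one_mul]
  have hleft' : s * (Sinv * s) = 1 := by rw [hlr, hright]
  set u : (K →L[ℂ] K)ˣ := ⟨s, Sinv * s, hleft', hleft⟩ with hudef
  -- the conjugated operator is nonneg
  have hP : (0 : K →L[ℂ] K) ≤ s * A * s := by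
    have := star_left_conjugate_nonneg hA0 s
    rwa [hssa.star_eq] at this
  -- Q = u * (s * A * s) * u⁻¹
  have hQeq : Q = ↑u * (s * A * s) * ↑u⁻¹ := by
    show Q = s * (s * A * s) * (Sinv * s)
    calc Q = (S * Sinv) * Q := by rw [hmulS, one_mul]
      _ = S * A := by rw [mul_assoc, ← hAmul]
      _ = s * (s * A * s) * (Sinv * s) := by
          rw [← hss]
          calc s * s * A = s * s * A * 1 := by rw [mul_one]
            _ = s * s * A * (s * (Sinv * s)) := by rw [hleft']
            _ = s * (s * A * s) * (Sinv * s) := by noncomm_ring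
  -- spectrum of Q is nonneg
  have hspec : spectrum ℝ Q = spectrum ℝ (s * A * s) := by
    rw [hQeq, spectrum.units_conjugate]
  have hQ0 : (0 : K →L[ℂ] K) ≤ Q := by
    rw [nonneg_iff_isSelfAdjoint_and_quasispectrumRestricts, quasispectrumRestricts_iff_spectrumRestricts]
    refine ⟨hQ, ?_⟩
    rw [SpectrumRestricts.nnreal_iff, hspec]
    exact fun x hx ↦ spectrum_nonneg_of_nonneg hP hx
  -- conclude
  have hQpos : Q.IsPositive := (ContinuousLinearMap.nonneg_iff_isPositive Q).mp hQ0
  intro f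
  obtain ⟨h1, h2⟩ := (ContinuousLinearMap.isPositive_iff_complex Q).mp hQpos f
  have : ⟪f, Q f⟫_ℂ = starRingEnd ℂ ⟪Q f, f⟫_ℂ := (inner_conj_symm f (Q f)).symm
  rw [this, ← h1]
  simp only [Complex.conj_ofReal]
  rw [Complex.le_def]
  simpa using h2
end
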